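/- arXiv:1910.06928 — 10 statements merged into one kernel-verified Lean document; each statement's English description precedes it below -/
import Mathlib

section
/- For all α, β, α′, β′ ∈ ℂ and every sequence F : ℕ → ℂ, the generalized binomial transforms satisfy the composition rule B_{α,β} (B_{α′,β′} F) = B_{α + α′β, ββ′} F. -/
/-- The generalized binomial transform. -/
noncomputable def binTransform (α β : ℂ) (F : ℕ → ℂ) : ℕ → ℂ :=
  fun n => ∑ k ∈ Finset.range (n + 1), (n.choose k : ℂ) * α ^ (n - k) * β ^ k * F k

/-- Composition rule for the generalized binomial transform:
`B_{α,β} (B_{α',β'} F) = B_{α + α' β, β β'} F`. -/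
theorem stmt_1 (α β α' β' : ℂ) (F : ℕ → ℂ) :
    binTransform α β (binTransform α' β' F) = binTransform (α + α' * β) (β * β') F := by
  funext n
  unfold binTransform
  simp only [Finset.mul_sum, Finset.range_eq_Ico]
  rw [← Finset.sum_Ico_Ico_comm 0 (n+1) (fun j k =>
      (n.choose k : ℂ) * α ^ (n - k) * β ^ k * ((k.choose j : ℂ) * α' ^ (k - j) * β' ^ j * F j))]
  refine Finset.sum_congr rfl fun j hj => ?_
  simp only [Finset.mem_Ico] at hj
  have hjn : j ≤ n := by omega
  rw [Finset.sum_Ico_eq_sum_range, show n + 1 - j = (n - j) + 1 from by omega,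
    show α + α' * β = α' * β + α from by ring, add_pow, Finset.mul_sum, Finset.sum_mul,
    Finset.sum_mul]
  refine Finset.sum_congr rfl fun m hm => ?_
  simp only [Finset.mem_range] at hm
  have hmn : m ≤ n - j := by omega
  have hc : (n.choose (j+m) : ℂ) * ((j+m).choose j) = (n.choose j) * ((n-j).choose m) := by
    rw [← Nat.cast_mul, ← Nat.cast_mul, Nat.choose_mul (by omega)]
    simp
  rw [Nat.sub_add_eq, Nat.add_sub_cancel_left, pow_add, mul_pow, mul_pow]
  linear_combination (α ^ (n - j - m) * β ^ j * β ^ m * α' ^ m * β' ^ j * F j) * hc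
end

section
/- For all α, β ∈ ℂ with β ≠ 0 and every sequence F : ℕ → ℂ, B_{−α/β, 1/β} (B_{α,β} F) = F; that is, the generalized binomial transform B_{α,β} is invertible with inverse B_{−α/β, 1/β}. -/
open Finset

/-- For `β ≠ 0`, the generalized binomial transform `B_{α,β}` is inverted by
`B_{-α/β, 1/β}`. -/
theorem stmt_2 (α β : ℂ) (hβ : β ≠ 0) (F : ℕ → ℂ) :
    binTransform (-α / β) (1 / β) (binTransform α β F) = F := by
  funext n
  simp only [binTransform, Finset.mul_sum]
  have swap : (∑ k ∈ range (n + 1), ∑ j ∈ range (k + 1),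
      (n.choose k : ℂ) * (-α / β) ^ (n - k) * (1 / β) ^ k *
        ((k.choose j : ℂ) * α ^ (k - j) * β ^ j * F j)) =
      ∑ j ∈ range (n + 1), ∑ k ∈ Ico j (n + 1),
      (n.choose k : ℂ) * (-α / β) ^ (n - k) * (1 / β) ^ k *
        ((k.choose j : ℂ) * α ^ (k - j) * β ^ j * F j) := by
    simp only [← Nat.Ico_zero_eq_range]
    rw [Finset.sum_Ico_Ico_comm]
  rw [swap]
  have key : ∀ j ∈ range (n + 1), (∑ k ∈ Ico j (n + 1),
      (n.choose k : ℂ) * (-α / β) ^ (n - k) * (1 / β) ^ k *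
        ((k.choose j : ℂ) * α ^ (k - j) * β ^ j * F j)) =
      (if j = n then 1 else 0) * F j := by
    intro j hj
    rw [Finset.mem_range] at hj
    have hjn : j ≤ n := Nat.lt_succ_iff.mp hj
    rw [Finset.sum_Ico_eq_sum_range]
    have hlen : n + 1 - j = (n - j) + 1 := by omega
    rw [hlen]
    have hterm : ∀ m ∈ range (n - j + 1),
        (n.choose (j + m) : ℂ) * (-α / β) ^ (n - (j + m)) * (1 / β) ^ (j + m) *
          (((j + m).choose j : ℂ) * α ^ (j + m - j) * β ^ j * F j) =
        ((n.choose j : ℂ) * F j) *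
          ((α / β) ^ m * (-α / β) ^ (n - j - m) * ((n - j).choose m : ℂ)) := by
      intro m hm
      rw [Finset.mem_range] at hm
      have hm' : m ≤ n - j := by omega
      have hc : n.choose (j + m) * (j + m).choose j = n.choose j * (n - j).choose m := by
        rw [Nat.choose_mul (n := n) (by omega : j ≤ j + m),
          Nat.add_sub_cancel_left]
      have hcC : (n.choose (j + m) : ℂ) * ((j + m).choose j) =
          (n.choose j) * ((n - j).choose m) := by exact_mod_cast congrArg Nat.cast hc
      have h1 : n - (j + m) = n - j - m := by omega
      have h2 : j + m - j = m := by omega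
      rw [h1, h2]
      have e1 : ((1 : ℂ) / β) ^ j * β ^ j = 1 := by
        rw [← mul_pow]; simp [hβ]
      have e2 : ((1 : ℂ) / β) ^ m * α ^ m = (α / β) ^ m := by
        rw [← mul_pow]; ring_nf
      calc (n.choose (j + m) : ℂ) * (-α / β) ^ (n - j - m) * (1 / β) ^ (j + m) *
              (((j + m).choose j : ℂ) * α ^ m * β ^ j * F j)
          = ((n.choose (j + m) : ℂ) * ((j + m).choose j)) * (((1 / β) ^ j * β ^ j) *
              ((-α / β) ^ (n - j - m) * ((1 / β) ^ m * α ^ m) * F j)) := by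
            rw [pow_add]; ring
        _ = ((n.choose j : ℂ) * F j) *
              ((α / β) ^ m * (-α / β) ^ (n - j - m) * ((n - j).choose m : ℂ)) := by
            rw [hcC, e1, e2]; ring
    rw [Finset.sum_congr rfl hterm, ← Finset.mul_sum, ← add_pow (α / β) (-α / β) (n - j)]
    have : (α / β + -α / β) = 0 := by ring
    rw [this]
    by_cases h : j = n
    · simp [h]
    · have : n - j ≠ 0 := by omega
      simp [h, zero_pow this]
  rw [Finset.sum_congr rfl key]
  simp
end

section
/- Let α, β ∈ ℂ and let F : ℕ → ℂ. Then B_{α,β}(M F) = M((I − αS)(B_{α,β} F)); concretely, for every n ∈ ℕ, ∑_{k=0}^{n} (n choose k) α^{n−k} β^{k} k F_k = n (B_{α,β}F)_n − α n (B_{α,β}F)_{n−1}, where the term (B_{α,β}F)_{n−1} is taken to be 0 when n = 0. -/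
lemma nat_key (m k : ℕ) :
    (m + 1) * Nat.choose m k + k * Nat.choose (m + 1) k = (m + 1) * Nat.choose (m + 1) k := by
  cases k with
  | zero => simp
  | succ j =>
    have h := Nat.add_one_mul_choose_eq m j
    calc (m+1) * m.choose (j+1) + (j+1) * (m+1).choose (j+1)
        = (m+1) * m.choose (j+1) + (m+1) * m.choose j := by
          rw [show (j+1) * (m+1).choose (j+1) = (m+1) * m.choose j by
            rw [mul_comm]; exact h.symm]
      _ = (m+1) * (m.choose j + m.choose (j+1)) := by ring
      _ = (m+1) * (m+1).choose (j+1) := by rw [Nat.choose_succ_succ']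

lemma key (α β Fk : ℂ) (m k : ℕ) (hk : k ≤ m + 1) :
    ((m+1).choose k : ℂ) * α ^ (m + 1 - k) * β ^ k * (k : ℂ) * Fk
      = ((m:ℂ)+1) * (((m+1).choose k : ℂ) * α ^ (m + 1 - k) * β ^ k * Fk)
        - α * ((m:ℂ)+1) * ((m.choose k : ℂ) * α ^ (m - k) * β ^ k * Fk) := by
  rcases eq_or_lt_of_le hk with h | h
  · subst h
    simp [Nat.choose_succ_self, Nat.choose_self]
    ring
  · have hk' : k ≤ m := Nat.lt_succ_iff.mp h
    have hpow : α ^ (m + 1 - k) = α * α ^ (m - k) := by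
      rw [Nat.succ_sub hk', pow_succ']
    have hc : ((m:ℂ)+1) * (m.choose k : ℂ) + (k : ℂ) * ((m+1).choose k : ℂ)
        = ((m:ℂ)+1) * ((m+1).choose k : ℂ) := by
      exact_mod_cast congrArg (Nat.cast (R := ℂ)) (nat_key m k)
    rw [hpow]
    linear_combination (α * α ^ (m - k) * β ^ k * Fk) * hc

/-- `B_{α,β}(M F) = M ((I - α S) (B_{α,β} F))`, i.e.
`∑_{k=0}^n C(n,k) α^{n-k} β^k k F_k = n (B F)_n - α n (B F)_{n-1}`,
where `(B F)_{n-1}` is taken to be `0` when `n = 0`. -/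
theorem stmt_6 (α β : ℂ) (F : ℕ → ℂ) (n : ℕ) :
    ∑ k ∈ Finset.range (n + 1), (n.choose k : ℂ) * α ^ (n - k) * β ^ k * (k : ℂ) * F k
      = (n : ℂ) * binTransform α β F n
        - α * (n : ℂ) * (if n = 0 then 0 else binTransform α β F (n - 1)) := by
  cases n with
  | zero => simp [binTransform]
  | succ m =>
    simp only [Nat.succ_ne_zero, if_false, Nat.add_sub_cancel, binTransform]
    push_cast
    have h2 : α * ((m:ℂ)+1) * ∑ k ∈ Finset.range (m+1),
          (m.choose k : ℂ) * α ^ (m-k) * β ^ k * F k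
        = ∑ k ∈ Finset.range (m+2),
            α * ((m:ℂ)+1) * ((m.choose k : ℂ) * α ^ (m-k) * β ^ k * F k) := by
      rw [Finset.mul_sum]
      symm
      rw [Finset.sum_range_succ]
      simp
    rw [h2, Finset.mul_sum, ← Finset.sum_sub_distrib]
    exact Finset.sum_congr rfl fun k hk =>
      key α β (F k) m k (Nat.lt_succ_iff.mp (Finset.mem_range.mp hk))
end

section
/- Let α, β ∈ ℂ, let p be a positive integer, and let F : ℕ → ℂ. Then β^p · B_{α,β}((S*)^p F) = (S* − αI)^p (B_{α,β} F), where (S*)^p F is the sequence n ↦ F_{n+p} and (S* − αI)^p denotes the p-fold composition of the operator G ↦ (n ↦ G_{n+1} − α G_n). -/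
lemma binTransform_shift_one (α β : ℂ) (F : ℕ → ℂ) (n : ℕ) :
    β * binTransform α β (fun m => F (m + 1)) n
      = binTransform α β F (n + 1) - α * binTransform α β F n := by
  have h1 : α * binTransform α β F n
      = ∑ k ∈ Finset.range (n + 2), (n.choose k : ℂ) * α ^ (n + 1 - k) * β ^ k * F k := by
    rw [binTransform, Finset.mul_sum,
      Finset.sum_range_succ (fun k => (n.choose k : ℂ) * α ^ (n + 1 - k) * β ^ k * F k) (n + 1)]
    simp only [Nat.choose_succ_self, Nat.cast_zero, zero_mul, mul_zero, zero_mul, add_zero]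
    refine Finset.sum_congr rfl fun k hk => ?_
    have hk' : k ≤ n := Nat.lt_succ_iff.mp (Finset.mem_range.mp hk)
    have h : n + 1 - k = (n - k) + 1 := by omega
    rw [h, pow_succ]
    ring
  rw [h1]
  rw [show binTransform α β F (n + 1)
      = ∑ k ∈ Finset.range (n + 2), ((n+1).choose k : ℂ) * α ^ (n + 1 - k) * β ^ k * F k from rfl]
  rw [← Finset.sum_sub_distrib]
  rw [Finset.sum_range_succ' _ (n + 1)]
  simp only [Nat.choose_zero_right, Nat.cast_one, pow_zero, Nat.sub_zero, one_mul, mul_one,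
    sub_self, add_zero]
  rw [binTransform, Finset.mul_sum]
  refine Finset.sum_congr rfl fun k hk => ?_
  have hk' : k ≤ n := Nat.lt_succ_iff.mp (Finset.mem_range.mp hk)
  have hc : ((n+1).choose (k+1) : ℂ) = (n.choose k : ℂ) + (n.choose (k+1) : ℂ) := by
    rw [Nat.choose_succ_succ]; push_cast; ring
  have he : n + 1 - (k + 1) = n - k := by omega
  rw [hc, he]
  ring

lemma iter_smul (α c : ℂ) (p : ℕ) (G : ℕ → ℂ) :
    (fun G : ℕ → ℂ => fun n => G (n + 1) - α * G n)^[p] (fun n => c * G n)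
      = fun n => c * ((fun G : ℕ → ℂ => fun n => G (n + 1) - α * G n)^[p] G n) := by
  induction p generalizing G with
  | zero => simp
  | succ p ih =>
    rw [Function.iterate_succ_apply, Function.iterate_succ_apply]
    rw [show (fun n => c * G n) = fun n => c * G n from rfl]
    have : (fun n => (fun n => c * G n) (n + 1) - α * (fun n => c * G n) n)
        = fun n => c * ((fun n => G (n + 1) - α * G n) n) := by
      funext n; ring
    rw [this, ih]

/-- `β^p B_{α,β}((S*)^p F) = (S* - α I)^p (B_{α,β} F)` for every positive integer `p`,
where `(S*)^p F = (n ↦ F (n+p))` and `(S* - α I)` is the operator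
`G ↦ (n ↦ G (n+1) - α G n)`. -/
theorem stmt_8 (α β : ℂ) (p : ℕ) (hp : 0 < p) (F : ℕ → ℂ) :
    (fun n => β ^ p * binTransform α β (fun m => F (m + p)) n)
      = (fun G : ℕ → ℂ => fun n => G (n + 1) - α * G n)^[p] (binTransform α β F) := by
  clear hp
  induction p generalizing F with
  | zero => simp
  | succ p ih =>
    rw [Function.iterate_succ_apply]
    have h1 : (fun n => binTransform α β F (n + 1) - α * binTransform α β F n)
        = fun n => β * binTransform α β (fun m => F (m + 1)) n := by
      funext n; rw [binTransform_shift_one]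
    rw [h1, iter_smul, ← ih (fun m => F (m + 1))]
    funext n
    have : (fun m => (fun m => F (m + 1)) (m + p)) = fun m => F (m + (p + 1)) := by
      funext m
      simp only []
      congr 1
    rw [this]
    ring
end

section
/- The set of p-recursive sequences is closed under the generalized binomial transform: let F : ℕ → ℂ be p-recursive, i.e., suppose there exist d ∈ ℕ and polynomials p_0, …, p_d ∈ ℂ[X] with p_d ≠ 0 such that ∑_{i=0}^{d} p_i(n) F_{n+i} = 0 for all n ∈ ℕ. Then for all α, β ∈ ℂ the sequence B_{α,β} F is p-recursive: there exist e ∈ ℕ and polynomials q_0, …, q_e ∈ ℂ[X], not all zero, such that ∑_{j=0}^{e} q_j(n) (B_{α,β} F)_{n+j} = 0 for all n ∈ ℕ. -/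
open Finset Polynomial

section
variable (α β : ℂ)

lemma binT_add (H1 H2 : ℕ → ℂ) (n : ℕ) :
    binTransform α β (fun k => H1 k + H2 k) n
      = binTransform α β H1 n + binTransform α β H2 n := by
  simp [binTransform, mul_add, Finset.sum_add_distrib]

lemma binT_const_mul (a : ℂ) (H : ℕ → ℂ) (n : ℕ) :
    binTransform α β (fun k => a * H k) n = a * binTransform α β H n := by
  simp only [binTransform, Finset.mul_sum]; apply Finset.sum_congr rfl; intros; ring

lemma binT_zero (n : ℕ) : binTransform α β (fun _ => 0) n = 0 := by
  simp [binTransform]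

-- L1
lemma binT_shift (H : ℕ → ℂ) (n : ℕ) :
    binTransform α β H (n+1)
      = α * binTransform α β H n + β * binTransform α β (fun k => H (k+1)) n := by
  rw [binTransform, Finset.sum_range_succ']
  have h1 : ∀ k ∈ Finset.range (n+1), ((n+1).choose (k+1) : ℂ) * α ^ (n+1-(k+1)) * β^(k+1) * H (k+1)
      = (n.choose k : ℂ) * α ^ (n-k) * β^(k+1) * H (k+1)
        + (n.choose (k+1) : ℂ) * α ^ (n-k) * β^(k+1) * H (k+1) := by
    intro k hk
    rw [Nat.choose_succ_succ]
    push_cast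
    simp only [Nat.succ_eq_add_one]
    ring
  rw [Finset.sum_congr rfl h1, Finset.sum_add_distrib]
  have h2 : ∑ k ∈ Finset.range (n+1), (n.choose k : ℂ) * α ^ (n-k) * β^(k+1) * H (k+1)
      = β * binTransform α β (fun k => H (k+1)) n := by
    rw [binTransform, Finset.mul_sum]
    apply Finset.sum_congr rfl; intros; ring
  have h3 : ∑ k ∈ Finset.range (n+1), (n.choose (k+1) : ℂ) * α ^ (n-k) * β^(k+1) * H (k+1)
        + ((n+1).choose 0 : ℂ) * α ^ (n+1-0) * β^0 * H 0
      = α * binTransform α β H n := by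
    have e1 : ∑ k ∈ Finset.range (n+1), (n.choose (k+1) : ℂ) * α ^ (n-k) * β^(k+1) * H (k+1)
        = ∑ k ∈ Finset.range n, (n.choose (k+1) : ℂ) * α ^ (n-k) * β^(k+1) * H (k+1) := by
      rw [Finset.sum_range_succ, Nat.choose_eq_zero_of_lt (by omega)]
      simp
    rw [e1, binTransform, Finset.mul_sum, Finset.sum_range_succ']
    congr 1
    · apply Finset.sum_congr rfl
      intro k hk
      rw [Finset.mem_range] at hk
      have h : n - k = (n - (k+1)) + 1 := by omega
      rw [h]; ring
    · simp [pow_succ]; ring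
  rw [add_assoc, h2, h3]; ring
end

-- L2
lemma binT_mulk (α β : ℂ) (H : ℕ → ℂ) (n : ℕ) :
    binTransform α β (fun k => (k:ℂ) * H k) (n+1)
      = ((n:ℂ)+1) * (binTransform α β H (n+1) - α * binTransform α β H n) := by
  have ext : binTransform α β H n
      = ∑ k ∈ Finset.range (n+2), (n.choose k : ℂ) * α ^ (n-k) * β^k * H k := by
    rw [show n+2 = (n+1)+1 from rfl, Finset.sum_range_succ, Nat.choose_eq_zero_of_lt (by omega)]
    simp [binTransform]
  rw [ext, binTransform, binTransform]
  simp only [show n+1+1 = n+2 from rfl]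
  rw [Finset.mul_sum, ← Finset.sum_sub_distrib, Finset.mul_sum]
  apply Finset.sum_congr rfl
  intro k hk
  rw [Finset.mem_range] at hk
  rcases Nat.lt_or_ge k (n+1) with hke | hke
  · have hsub : n + 1 - k = (n - k) + 1 := by omega
    have hc : ((n:ℂ)+1) * (n.choose k : ℂ) = ((n:ℂ)+1-(k:ℂ)) * ((n+1).choose k : ℂ) := by
      have := Nat.choose_mul_succ_eq n k
      have h2 : ((n.choose k * (n+1) : ℕ) : ℂ) = (((n+1).choose k * (n+1-k) : ℕ) : ℂ) := by
        exact_mod_cast congrArg Nat.cast this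
      push_cast at h2
      rw [Nat.cast_sub (by omega)] at h2
      push_cast at h2
      linear_combination h2
    rw [hsub, pow_succ]
    linear_combination (α^(n-k) * α * β^k * H k) * hc
  · have hk1 : k = n + 1 := by omega
    subst hk1
    rw [Nat.choose_eq_zero_of_lt (show n < n+1 by omega)]
    simp [Nat.choose_self]
    try ring

noncomputable def shiftL : Module.End ℂ (ℕ → ℂ) := LinearMap.funLeft ℂ ℂ (fun n => n + 1)

lemma shiftL_apply (b : ℕ → ℂ) (n : ℕ) : shiftL b n = b (n+1) := rfl

lemma shiftL_pow (j : ℕ) (b : ℕ → ℂ) (n : ℕ) : (shiftL ^ j) b n = b (n + j) := by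
  induction j generalizing b n with
  | zero => simp
  | succ j ih =>
    rw [pow_succ', Module.End.mul_apply, shiftL_apply]
    rw [ih]
    congr 1
    omega

lemma tau_pow (α : ℂ) (i : ℕ) (b : ℕ → ℂ) (n : ℕ) :
    ((shiftL - α • 1)^i) b n
      = ∑ j ∈ Finset.range (i+1), (i.choose j : ℂ) * (-α)^(i-j) * b (n+j) := by
  have hcomm : Commute shiftL ((-α) • (1 : Module.End ℂ (ℕ → ℂ))) :=
    Commute.smul_right (Commute.one_right _) _
  rw [sub_eq_add_neg, ← neg_smul α (1 : Module.End ℂ (ℕ → ℂ)), hcomm.add_pow]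
  rw [LinearMap.coe_sum, Finset.sum_apply, Finset.sum_apply]
  apply Finset.sum_congr rfl
  intro m hm
  rw [_root_.smul_pow, one_pow, Module.End.mul_apply, Module.End.mul_apply,
    Module.End.natCast_apply]
  rw [LinearMap.smul_apply, Module.End.one_apply, shiftL_pow]
  simp only [Pi.smul_apply, smul_eq_mul, nsmul_eq_mul, Nat.cast_smul_eq_nsmul, Pi.mul_apply, Pi.natCast_apply]
  ring

lemma binT_S (α β : ℂ) (hβ : β ≠ 0) (H : ℕ → ℂ) :
    binTransform α β (fun k => H (k+1))
      = β⁻¹ • ((shiftL - α • 1) (binTransform α β H)) := by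
  funext n
  simp only [Pi.smul_apply, LinearMap.sub_apply, LinearMap.smul_apply, Module.End.one_apply,
    Pi.sub_apply, shiftL_apply, smul_eq_mul]
  rw [binT_shift α β H n]
  field_simp
  try ring

lemma binT_Si (α β : ℂ) (hβ : β ≠ 0) (H : ℕ → ℂ) (i : ℕ) :
    binTransform α β (fun k => H (k+i))
      = (β⁻¹)^i • (((shiftL - α • 1)^i) (binTransform α β H)) := by
  induction i generalizing H with
  | zero => simp [binTransform]
  | succ i ih =>
    have h1 : (fun k => H (k+(i+1))) = (fun k => (fun j => H (j+1)) (k+i)) := rfl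
    rw [h1, ih (fun j => H (j+1)), binT_S α β hβ H]
    rw [map_smul, smul_smul, ← pow_succ]
    congr 1
    try rw [← Module.End.mul_apply, ← pow_succ]

lemma binT_Si_apply (α β : ℂ) (hβ : β ≠ 0) (H : ℕ → ℂ) (i n : ℕ) :
    binTransform α β (fun k => H (k+i)) n
      = ∑ j ∈ Finset.range (i+1),
          (β⁻¹)^i * (i.choose j : ℂ) * (-α)^(i-j) * binTransform α β H (n+j) := by
  rw [binT_Si α β hβ H i]
  rw [Pi.smul_apply, tau_pow, smul_eq_mul, Finset.mul_sum]
  apply Finset.sum_congr rfl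
  intros
  ring

def QP (α β : ℂ) (p : Polynomial ℂ) (r : ℕ) (c : ℕ → Polynomial ℂ) : Prop :=
  c r = p.comp (X + C (r:ℂ)) ∧
  ∀ (H : ℕ → ℂ) (n : ℕ),
    binTransform α β (fun k => p.eval (k:ℂ) * H k) (n + r)
      = ∑ t ∈ Finset.range (r+1), (c t).eval (n:ℂ) * binTransform α β H (n + t)

noncomputable def shiftc (c : ℕ → Polynomial ℂ) : ℕ → Polynomial ℂ
  | 0 => 0
  | s+1 => (c s).comp (X + C 1)

@[simp] lemma shiftc_zero (c : ℕ → Polynomial ℂ) : shiftc c 0 = 0 := rfl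
@[simp] lemma shiftc_succ (c : ℕ → Polynomial ℂ) (s : ℕ) :
    shiftc c (s+1) = (c s).comp (X + C 1) := rfl

lemma comp_X_add_one (p : Polynomial ℂ) (r : ℕ) :
    (p.comp (X + C (r:ℂ))).comp (X + C 1) = p.comp (X + C (((r+1:ℕ)) : ℂ)) := by
  rw [Polynomial.comp_assoc]
  congr 1
  simp only [Polynomial.add_comp, Polynomial.X_comp, Polynomial.C_comp]
  rw [show ((r+1:ℕ):ℂ) = (1:ℂ) + (r:ℂ) by push_cast; ring, Polynomial.C_add]
  ring

lemma QP_const (α β a : ℂ) : QP α β (C a) 0 (fun _ => C a) := by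
  constructor
  · simp
  · intro H n
    rw [Finset.sum_range_one]
    simpa using binT_const_mul α β a H n

lemma QP_pad (α β : ℂ) (p : Polynomial ℂ) (r : ℕ) (c : ℕ → Polynomial ℂ)
    (h : QP α β p r c) :
    QP α β p (r+1) (shiftc c) := by
  obtain ⟨htop, hsum⟩ := h
  constructor
  · rw [shiftc_succ, htop, comp_X_add_one]
  · intro H n
    have key : ∑ t ∈ Finset.range (r+1+1), (shiftc c t).eval (n:ℂ) * binTransform α β H (n + t)
        = ∑ t ∈ Finset.range (r+1), (c t).eval ((↑(n+1)):ℂ) * binTransform α β H ((n+1) + t) := by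
      rw [Finset.sum_range_succ']
      simp only [shiftc_zero, shiftc_succ, eval_zero, zero_mul, add_zero]
      apply Finset.sum_congr rfl
      intro s _
      rw [Polynomial.eval_comp]
      simp only [eval_add, eval_X, eval_C]
      congr 2
      · push_cast; ring
      · omega
    rw [key, show n + (r+1) = (n+1) + r from by omega, hsum H (n+1)]

lemma QP_add (α β : ℂ) (p1 p2 : Polynomial ℂ) (r : ℕ) (c1 c2 : ℕ → Polynomial ℂ)
    (h1 : QP α β p1 r c1) (h2 : QP α β p2 r c2) :
    QP α β (p1 + p2) r (fun t => c1 t + c2 t) := by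
  constructor
  · show c1 r + c2 r = _
    rw [h1.1, h2.1, Polynomial.add_comp]
  · intro H n
    have e : (fun (k:ℕ) => (p1+p2).eval (k:ℂ) * H k)
        = (fun (k:ℕ) => p1.eval (k:ℂ) * H k + p2.eval (k:ℂ) * H k) := by
      funext k; simp [add_mul]
    rw [e, binT_add, h1.2 H n, h2.2 H n, ← Finset.sum_add_distrib]
    apply Finset.sum_congr rfl
    intros; simp; ring

lemma QP_mulX (α β : ℂ) (p : Polynomial ℂ) (r : ℕ) (c : ℕ → Polynomial ℂ)
    (h : QP α β p r c) :
    QP α β (X * p) (r+1)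
      (fun t => (X + C ((r:ℂ)+1)) *
        (shiftc c t - C α * (if t ≤ r then c t else 0))) := by
  obtain ⟨htop, hsum⟩ := h
  constructor
  · show (X + C ((r:ℂ)+1)) * (shiftc c (r+1) - C α * (if r+1 ≤ r then c (r+1) else 0)) = _
    rw [if_neg (show ¬ (r+1 ≤ r) by omega), mul_zero, sub_zero, shiftc_succ, htop,
      comp_X_add_one, Polynomial.mul_comp, Polynomial.X_comp]
    rw [show ((r+1:ℕ):ℂ) = (r:ℂ)+1 by push_cast; ring]
  · intro H n
    have hA : (fun (k:ℕ) => (X*p).eval (k:ℂ) * H k)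
        = (fun (k:ℕ) => (k:ℂ) * (p.eval (k:ℂ) * H k)) := by
      funext k; simp [mul_assoc]
    rw [hA, show n + (r+1) = (n+r) + 1 from rfl, binT_mulk α β _ (n+r)]
    have h1 : binTransform α β (fun k => p.eval (k:ℂ) * H k) (n+r+1)
        = ∑ s ∈ Finset.range (r+1), (c s).eval ((↑(n+1)):ℂ) * binTransform α β H (n + (s+1)) := by
      rw [show n+r+1 = (n+1)+r from by omega, hsum H (n+1)]
      apply Finset.sum_congr rfl
      intro s _
      congr 2
      omega
    rw [h1, hsum H n]
    have e0 : ∀ t, ((X + C ((r:ℂ)+1)) *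
          (shiftc c t - C α * (if t ≤ r then c t else 0))).eval (n:ℂ)
        = ((n:ℂ)+(r:ℂ)+1) * ((shiftc c t).eval (n:ℂ)
            - α * (if t ≤ r then (c t).eval (n:ℂ) else 0)) := by
      intro t
      split_ifs <;>
        simp only [eval_mul, eval_add, eval_sub, eval_X, eval_C, eval_zero, mul_zero] <;>
        ring
    have key : ∑ t ∈ Finset.range (r+1+1),
          ((X + C ((r:ℂ)+1)) * (shiftc c t - C α * (if t ≤ r then c t else 0))).eval (n:ℂ)
            * binTransform α β H (n + t)
        = ((n:ℂ)+(r:ℂ)+1) *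
          ((∑ s ∈ Finset.range (r+1), (c s).eval ((↑(n+1)):ℂ) * binTransform α β H (n + (s+1)))
            - α * ∑ t ∈ Finset.range (r+1), (c t).eval (n:ℂ) * binTransform α β H (n + t)) := by
      have S1 : ∑ t ∈ Finset.range (r+1+1), (shiftc c t).eval (n:ℂ) * binTransform α β H (n + t)
          = ∑ s ∈ Finset.range (r+1), (c s).eval ((↑(n+1)):ℂ) * binTransform α β H (n + (s+1)) := by
        rw [Finset.sum_range_succ']
        simp only [shiftc_zero, shiftc_succ, eval_zero, zero_mul, add_zero]
        apply Finset.sum_congr rfl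
        intro s _
        rw [Polynomial.eval_comp]
        simp only [eval_add, eval_X, eval_C]
        congr 2
        push_cast; ring
      have S2 : ∑ t ∈ Finset.range (r+1+1),
            (if t ≤ r then (c t).eval (n:ℂ) else 0) * binTransform α β H (n + t)
          = ∑ t ∈ Finset.range (r+1), (c t).eval (n:ℂ) * binTransform α β H (n + t) := by
        rw [Finset.sum_range_succ, if_neg (show ¬ (r+1 ≤ r) by omega), zero_mul, add_zero]
        apply Finset.sum_congr rfl
        intro t ht
        rw [Finset.mem_range] at ht
        rw [if_pos (by omega)]
      calc ∑ t ∈ Finset.range (r+1+1),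
            ((X + C ((r:ℂ)+1)) * (shiftc c t - C α * (if t ≤ r then c t else 0))).eval (n:ℂ)
              * binTransform α β H (n + t)
          = ∑ t ∈ Finset.range (r+1+1), (((n:ℂ)+(r:ℂ)+1) * ((shiftc c t).eval (n:ℂ)
              - α * (if t ≤ r then (c t).eval (n:ℂ) else 0))) * binTransform α β H (n + t) :=
            Finset.sum_congr rfl (fun t _ => by rw [e0 t])
        _ = ((n:ℂ)+(r:ℂ)+1) *
            ((∑ t ∈ Finset.range (r+1+1), (shiftc c t).eval (n:ℂ) * binTransform α β H (n + t))
              - α * ∑ t ∈ Finset.range (r+1+1),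
                  (if t ≤ r then (c t).eval (n:ℂ) else 0) * binTransform α β H (n + t)) := by
            rw [Finset.mul_sum, ← Finset.sum_sub_distrib, Finset.mul_sum]
            apply Finset.sum_congr rfl
            intros; ring
        _ = _ := by rw [S1, S2]
    rw [key]
    push_cast
    ring

lemma QEx (α β : ℂ) (p : Polynomial ℂ) : ∃ r c, QP α β p r c := by
  induction p using Polynomial.induction_on with
  | C a => exact ⟨0, _, QP_const α β a⟩
  | add p q hp hq =>
    obtain ⟨r1, c1, h1⟩ := hp
    obtain ⟨r2, c2, h2⟩ := hq
    have pad : ∀ (p : Polynomial ℂ) r c, QP α β p r c → ∀ r', r ≤ r' → ∃ c', QP α β p r' c' := by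
      intro p r c h r' hr
      induction r', hr using Nat.le_induction with
      | base => exact ⟨c, h⟩
      | succ r' hr ih =>
        obtain ⟨c', h'⟩ := ih
        exact ⟨_, QP_pad α β p r' c' h'⟩
    obtain ⟨c1', h1'⟩ := pad p r1 c1 h1 (max r1 r2) (le_max_left _ _)
    obtain ⟨c2', h2'⟩ := pad q r2 c2 h2 (max r1 r2) (le_max_right _ _)
    exact ⟨max r1 r2, _, QP_add α β p q _ c1' c2' h1' h2'⟩
  | monomial m a hm =>
    obtain ⟨r, c, h⟩ := hm
    have h2 := QP_mulX α β _ r c h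
    rw [show (X : Polynomial ℂ) * (C a * X ^ m) = C a * X ^ (m+1) from by ring] at h2
    exact ⟨r+1, _, h2⟩

lemma QP_pad_le (α β : ℂ) (p : Polynomial ℂ) (r : ℕ) (c : ℕ → Polynomial ℂ)
    (h : QP α β p r c) (r' : ℕ) (hr : r ≤ r') : ∃ c', QP α β p r' c' := by
  induction r', hr using Nat.le_induction with
  | base => exact ⟨c, h⟩
  | succ r' hr ih =>
    obtain ⟨c', h'⟩ := ih
    exact ⟨_, QP_pad α β p r' c' h'⟩

lemma binT_sum (α β : ℂ) {ι : Type*} (s : Finset ι) (g : ι → ℕ → ℂ) (n : ℕ) :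
    binTransform α β (fun k => ∑ i ∈ s, g i k) n = ∑ i ∈ s, binTransform α β (g i) n := by
  simp only [binTransform]
  rw [Finset.sum_comm]
  apply Finset.sum_congr rfl
  intros
  rw [Finset.mul_sum]

/-- The set of p-recursive sequences is closed under the generalized binomial transform:
if `F` satisfies a linear homogeneous recurrence with polynomial coefficients whose leading
coefficient is a nonzero polynomial, then so does `B_{α,β} F` (with coefficients not all zero). -/
theorem stmt_9 (F : ℕ → ℂ) (d : ℕ) (p : Fin (d + 1) → Polynomial ℂ)
    (hlead : p (Fin.last d) ≠ 0)
    (hrec : ∀ n : ℕ, ∑ i : Fin (d + 1), (p i).eval (n : ℂ) * F (n + i) = 0)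
    (α β : ℂ) :
    ∃ (e : ℕ) (q : Fin (e + 1) → Polynomial ℂ), (∃ j, q j ≠ 0) ∧
      ∀ n : ℕ, ∑ j : Fin (e + 1), (q j).eval (n : ℂ) * binTransform α β F (n + j) = 0 := by
  by_cases hβ : β = 0
  · -- degenerate case: binTransform α 0 F n = α^n * F 0
    subst hβ
    have hval : ∀ n, binTransform α 0 F n = α^n * F 0 := by
      intro n
      rw [binTransform, Finset.sum_eq_single 0]
      · simp
      · intro b _ hb
        rcases Nat.exists_eq_succ_of_ne_zero hb with ⟨m, rfl⟩
        simp [zero_pow]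
      · intro h; simp at h
    refine ⟨1, fun j => if j = 0 then C (-α) else 1, ⟨1, by norm_num⟩, ?_⟩
    intro n
    rw [Fin.sum_univ_two]
    simp [hval, pow_succ]
    ring
  · -- main case
    -- get a common QP representation
    have hQ : ∀ i : Fin (d+1), ∃ r c, QP α β (p i) r c := fun i => QEx α β (p i)
    choose r c hc using hQ
    set R := Finset.univ.sup r with hR
    have hle : ∀ i, r i ≤ R := fun i => Finset.le_sup (Finset.mem_univ i)
    have hQ' : ∀ i : Fin (d+1), ∃ c', QP α β (p i) R c' :=
      fun i => QP_pad_le α β (p i) (r i) (c i) (hc i) R (hle i)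
    choose c' hc' using hQ'
    set G := binTransform α β F with hG
    set e := R + d with he
    -- the master relation
    have master : ∀ n : ℕ, ∑ i : Fin (d+1),
        ∑ t ∈ Finset.range (R+1), ((c' i t).eval (n:ℂ)) *
          binTransform α β (fun k => F (k + (i:ℕ))) (n + t) = 0 := by
      intro n
      have h1 : ∀ i : Fin (d+1), ∑ t ∈ Finset.range (R+1), ((c' i t).eval (n:ℂ)) *
            binTransform α β (fun k => F (k + (i:ℕ))) (n + t)
          = binTransform α β (fun k => (p i).eval (k:ℂ) * F (k + (i:ℕ))) (n + R) :=
        fun i => ((hc' i).2 (fun k => F (k + (i:ℕ))) n).symm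
      rw [Finset.sum_congr rfl (fun i _ => h1 i), ← binT_sum]
      have : (fun (k:ℕ) => ∑ i : Fin (d+1), (p i).eval (k:ℂ) * F (k + (i:ℕ))) = (fun _ => 0) := by
        funext k
        exact hrec k
      rw [this, binT_zero]
    -- expand each binT (S^i F) via binT_Si_apply
    have master2 : ∀ n : ℕ, ∑ i : Fin (d+1),
        ∑ t ∈ Finset.range (R+1), ∑ j ∈ Finset.range ((i:ℕ)+1),
          ((c' i t).eval (n:ℂ)) * ((β⁻¹)^(i:ℕ) * ((i:ℕ).choose j : ℂ) * (-α)^((i:ℕ)-j))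
            * G (n + (t + j)) = 0 := by
      intro n
      rw [← master n]
      apply Finset.sum_congr rfl
      intro i _
      apply Finset.sum_congr rfl
      intro t _
      rw [binT_Si_apply α β hβ F (i:ℕ) (n+t), Finset.mul_sum]
      apply Finset.sum_congr rfl
      intro j _
      rw [hG, show n + t + j = n + (t + j) from by omega]
      ring
    -- define the final coefficients
    set q' : ℕ → Polynomial ℂ := fun s =>
      ∑ i : Fin (d+1), ∑ t ∈ Finset.range (R+1), ∑ j ∈ Finset.range ((i:ℕ)+1),
        if s = t + j then
          C ((β⁻¹)^(i:ℕ) * ((i:ℕ).choose j : ℂ) * (-α)^((i:ℕ)-j)) * c' i t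
        else 0 with hq'
    have hrel : ∀ n : ℕ, ∑ s ∈ Finset.range (e+1), (q' s).eval (n:ℂ) * G (n + s) = 0 := by
      intro n
      have expand : ∑ s ∈ Finset.range (e+1), (q' s).eval (n:ℂ) * G (n + s)
          = ∑ i : Fin (d+1), ∑ t ∈ Finset.range (R+1), ∑ j ∈ Finset.range ((i:ℕ)+1),
              ((c' i t).eval (n:ℂ)) * ((β⁻¹)^(i:ℕ) * ((i:ℕ).choose j : ℂ) * (-α)^((i:ℕ)-j))
                * G (n + (t + j)) := by
        have step1 : ∀ s ∈ Finset.range (e+1), (q' s).eval (n:ℂ) * G (n + s)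
            = ∑ i : Fin (d+1), ∑ t ∈ Finset.range (R+1), ∑ j ∈ Finset.range ((i:ℕ)+1),
                (if s = t + j then
                  ((c' i t).eval (n:ℂ)) * ((β⁻¹)^(i:ℕ) * ((i:ℕ).choose j : ℂ) * (-α)^((i:ℕ)-j))
                    * G (n + (t + j))
                 else 0) := by
          intro s _
          rw [hq']
          simp only [Polynomial.eval_finset_sum, Finset.sum_mul]
          apply Finset.sum_congr rfl; intro i _
          apply Finset.sum_congr rfl; intro t _
          apply Finset.sum_congr rfl; intro j _
          split_ifs with hij
          · subst hij
            simp only [eval_mul, eval_C]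
            ring
          · simp
        rw [Finset.sum_congr rfl step1]
        rw [Finset.sum_comm]
        apply Finset.sum_congr rfl; intro i _
        rw [Finset.sum_comm]
        apply Finset.sum_congr rfl; intro t ht
        rw [Finset.sum_comm]
        apply Finset.sum_congr rfl; intro j hj
        rw [Finset.mem_range] at hj ht
        have hmem : t + j ∈ Finset.range (e+1) := by
          rw [Finset.mem_range]
          have hi : (i:ℕ) < d+1 := i.isLt
          omega
        rw [Finset.sum_ite_eq' (Finset.range (e+1)) (t+j)
          (fun _ => ((c' i t).eval (n:ℂ)) * ((β⁻¹)^(i:ℕ) * ((i:ℕ).choose j : ℂ) * (-α)^((i:ℕ)-j))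
              * G (n + (t + j))), if_pos hmem]
      rw [expand, master2 n]
    -- nonvanishing of the top coefficient
    have htop : q' e = C ((β⁻¹)^d) * c' (Fin.last d) R := by
      simp only [hq']
      rw [Finset.sum_eq_single (Fin.last d)]
      · rw [Finset.sum_eq_single R]
        · rw [Finset.sum_eq_single d]
          · rw [if_pos (by rw [he])]
            congr 1
            simp [Fin.val_last]
          · intro j hj hne
            rw [Finset.mem_range, Fin.val_last] at hj
            rw [if_neg (by omega)]
          · intro h
            exfalso
            apply h
            rw [Finset.mem_range, Fin.val_last]
            omega
        · intro t ht hne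
          rw [Finset.mem_range] at ht
          apply Finset.sum_eq_zero
          intro j hj
          rw [Finset.mem_range, Fin.val_last] at hj
          rw [if_neg (by omega)]
        · intro h
          exfalso
          exact h (Finset.mem_range.mpr (by omega))
      · intro i _ hne
        have hi : (i:ℕ) < d := Fin.val_lt_last hne
        apply Finset.sum_eq_zero
        intro t ht
        rw [Finset.mem_range] at ht
        apply Finset.sum_eq_zero
        intro j hj
        rw [Finset.mem_range] at hj
        rw [if_neg (by omega)]
      · intro h
        exact absurd (Finset.mem_univ _) h
    have hq'e : q' e ≠ 0 := by
      rw [htop]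
      apply mul_ne_zero
      · rw [Ne, Polynomial.C_eq_zero]
        exact pow_ne_zero _ (inv_ne_zero hβ)
      · rw [(hc' (Fin.last d)).1]
        intro hzero
        rw [Polynomial.comp_X_add_C_eq_zero_iff] at hzero
        exact hlead hzero
    refine ⟨e, fun j => q' (j:ℕ), ⟨Fin.last e, by simpa [Fin.val_last] using hq'e⟩, ?_⟩
    intro n
    exact (Fin.sum_univ_eq_sum_range (fun s => (q' s).eval (n:ℂ) * G (n+s)) (e+1)).trans (hrel n)
end

section
/- (Generalized Euler transform identity.) Let α, β ∈ ℂ with β ≠ 0, α + β ≠ 0, and |α| < |α + β|, and let F : ℕ → ℂ be a summable sequence. Assume that the double family (n, k) ↦ (n choose k) α^{n−k} β^{k+1} F_k / (α+β)^{n+1}, indexed over pairs (n,k) ∈ ℕ × ℕ with k ≤ n, is absolutely summable. Then the sequence n ↦ β (B_{α,β} F)_n / (α+β)^{n+1} is summable and ∑_{k=0}^{∞} F_k = ∑_{n=0}^{∞} β (B_{α,β} F)_n / (α+β)^{n+1}. -/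
set_option maxHeartbeats 1000000 in
/-- Generalized Euler transform identity: if `F` is summable and the double family
`(n,k) ↦ C(n,k) α^{n-k} β^{k+1} F_k / (α+β)^{n+1}` (over pairs with `k ≤ n`) is absolutely
summable, then `∑ F_k = ∑ β (B_{α,β} F)_n / (α+β)^{n+1}`. -/
theorem stmt_10 (α β : ℂ) (hβ : β ≠ 0) (hαβ : α + β ≠ 0)
    (habs : ‖α‖ < ‖α + β‖)
    (F : ℕ → ℂ) (hF : Summable F)
    (hdouble : Summable (fun p : {q : ℕ × ℕ // q.2 ≤ q.1} =>
      ‖(p.1.1.choose p.1.2 : ℂ) * α ^ (p.1.1 - p.1.2) * β ^ (p.1.2 + 1) * F p.1.2 /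
        (α + β) ^ (p.1.1 + 1)‖)) :
    Summable (fun n => β * binTransform α β F n / (α + β) ^ (n + 1)) ∧
      ∑' k, F k = ∑' n, β * binTransform α β F n / (α + β) ^ (n + 1) := by
  classical
  set f : ℕ × ℕ → ℂ := fun p =>
    (p.1.choose p.2 : ℂ) * α ^ (p.1 - p.2) * β ^ (p.2 + 1) * F p.2 / (α + β) ^ (p.1 + 1) with hf
  set s : Set (ℕ × ℕ) := {q : ℕ × ℕ | q.2 ≤ q.1} with hs
  set g : ℕ × ℕ → ℂ := s.indicator f with hgdef
  -- summability of g
  have hsub : Summable (fun p : s => f p) := by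
    apply Summable.of_norm
    exact hdouble
  have hg : Summable g := (summable_subtype_iff_indicator).1 hsub
  have hgS : HasSum g (∑' p, g p) := hg.hasSum
  -- ratio
  set r : ℂ := α / (α + β) with hr
  have hrnorm : ‖r‖ < 1 := by
    rw [hr, norm_div,
      div_lt_one (norm_pos_iff.mpr hαβ)]
    exact habs
  have h1r : 1 - r = β / (α + β) := by
    field_simp [hr]
    rw [hr, sub_mul, div_mul_cancel₀ _ hαβ]
    ring
  -- column sums: for each k, ∑' n, g (n, k) = F k
  have hcol : ∀ k : ℕ, HasSum (fun n => g (n, k)) (F k) := by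
    intro k
    have key : HasSum (fun m : ℕ => ((m + k).choose k : ℂ) * r ^ m) (1 / (1 - r) ^ (k + 1)) :=
      hasSum_choose_mul_geometric_of_norm_lt_one k hrnorm
    have key2 := key.mul_right (β ^ (k + 1) * F k / (α + β) ^ (k + 1))
    have hval : 1 / (1 - r) ^ (k + 1) * (β ^ (k + 1) * F k / (α + β) ^ (k + 1)) = F k := by
      rw [h1r]
      rw [div_pow]
      field_simp
    rw [hval] at key2
    have heq : ∀ m : ℕ, ((m + k).choose k : ℂ) * r ^ m *
        (β ^ (k + 1) * F k / (α + β) ^ (k + 1)) = g (m + k, k) := by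
      intro m
      have hmem : (m + k, k) ∈ s := by simp [hs]
      rw [hgdef, Set.indicator_of_mem hmem, hf]
      simp only
      have h1 : m + k - k = m := by omega
      have hsplit : (α + β) ^ (m + k + 1) = (α + β) ^ m * (α + β) ^ (k + 1) := by
        rw [← pow_add, Nat.add_assoc]
      rw [h1, hr, div_pow, hsplit]
      have hαβm : (α + β) ^ m ≠ 0 := pow_ne_zero _ hαβ
      have hαβk : (α + β) ^ (k + 1) ≠ 0 := pow_ne_zero _ hαβ
      field_simp
    have key3 : HasSum (fun m : ℕ => g (m + k, k)) (F k) := by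
      apply key2.congr_fun
      intro m
      exact (heq m).symm
    have hinj : Function.Injective (fun m : ℕ => m + k) := add_left_injective k
    have hzero : ∀ n : ℕ, n ∉ Set.range (fun m : ℕ => m + k) → g (n, k) = 0 := by
      intro n hn
      have hnk : ¬ k ≤ n := by
        intro h
        exact hn ⟨n - k, by show n - k + k = n; omega⟩
      rw [hgdef, Set.indicator_of_notMem (by simpa [hs] using hnk)]
    exact (Function.Injective.hasSum_iff hinj (fun n hn => hzero n hn)).1 key3
  -- row sums: for each n, ∑' k, g (n, k) = β * binTransform α β F n / (α + β) ^ (n + 1)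
  have hrow : ∀ n : ℕ, HasSum (fun k => g (n, k))
      (β * binTransform α β F n / (α + β) ^ (n + 1)) := by
    intro n
    have hsupp : ∀ k ∉ Finset.range (n + 1), g (n, k) = 0 := by
      intro k hk
      simp only [Finset.mem_range] at hk
      have : ¬ k ≤ n := by omega
      rw [hgdef, Set.indicator_of_notMem (by simpa [hs] using this)]
    have hsum : ∑ k ∈ Finset.range (n + 1), g (n, k) =
        β * binTransform α β F n / (α + β) ^ (n + 1) := by
      rw [binTransform, Finset.mul_sum, Finset.sum_div]
      apply Finset.sum_congr rfl
      intro k hk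
      simp only [Finset.mem_range] at hk
      have hkn : k ≤ n := by omega
      rw [hgdef, Set.indicator_of_mem (by simpa [hs] using hkn), hf]
      simp only
      ring
    rw [← hsum]
    exact hasSum_sum_of_ne_finset_zero hsupp
  -- assemble
  have hswap : HasSum (fun p : ℕ × ℕ => g (p.2, p.1)) (∑' p, g p) :=
    ((Equiv.prodComm ℕ ℕ).hasSum_iff).2 hgS
  have hFsum : HasSum F (∑' p, g p) :=
    hswap.prod_fiberwise (fun k => hcol k)
  have hrowsum : HasSum (fun n => β * binTransform α β F n / (α + β) ^ (n + 1)) (∑' p, g p) :=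
    hgS.prod_fiberwise (fun n => hrow n)
  refine ⟨hrowsum.summable, ?_⟩
  rw [hFsum.tsum_eq, hrowsum.tsum_eq]
end

section
/- (One step of extrapolation accelerates linearly convergent sequences.) Let g ∈ ℂ with 0 < |g| < 1 and g ≠ 1, let μ ∈ ℝ, and let c, L ∈ ℂ. Suppose F : ℕ → ℂ satisfies: there is a constant C ≥ 0 such that |F_k − L − c g^k / k^μ| ≤ C |g|^k / k^{μ+1} for all k ≥ 1. Set α = 1/(1−g) and β = g/(g−1), and define G : ℕ → ℂ by G = α F + β (S F), i.e., G_0 = α F_0 and G_k = α F_k + β F_{k−1} for k ≥ 1. Then there is a constant C′ ≥ 0 such that |G_k − L| ≤ C′ |g|^k / k^{μ+1} for all k ≥ 1. -/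
-- x^s ≤ 2^|s| y^s when y/2 ≤ x ≤ y, 0 < x
lemma lemA (s x y : ℝ) (hx : 0 < x) (h1 : y/2 ≤ x) (h2 : x ≤ y) :
    x ^ s ≤ 2 ^ |s| * y ^ s := by
  have hy : 0 < y := lt_of_lt_of_le hx h2
  rcases le_or_gt 0 s with hs | hs
  · have h3 : x ^ s ≤ y ^ s := Real.rpow_le_rpow hx.le h2 hs
    have h4 : (1:ℝ) ≤ 2 ^ |s| := Real.one_le_rpow (by norm_num) (abs_nonneg s)
    nlinarith [Real.rpow_nonneg hy.le s]
  · have h3 : x ^ s ≤ (y/2) ^ s := Real.rpow_le_rpow_of_nonpos (by positivity) h1 hs.le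
    have h4 : (y/2) ^ s = y ^ s / 2 ^ s := Real.div_rpow hy.le (by norm_num) s
    have h5 : (2:ℝ) ^ |s| = ((2:ℝ) ^ s)⁻¹ := by
      rw [abs_of_neg hs, Real.rpow_neg (by norm_num)]
    rw [h5]
    have h6 : (0:ℝ) < 2 ^ s := Real.rpow_pos_of_pos (by norm_num) s
    calc x ^ s ≤ y ^ s / 2 ^ s := by rw [← h4]; exact h3
    _ = (2 ^ s)⁻¹ * y ^ s := by ring

lemma lemB (μ : ℝ) : ∃ K : ℝ, 0 ≤ K ∧ ∀ k : ℕ, 2 ≤ k →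
    |1/((k:ℝ))^μ - 1/((k:ℝ)-1)^μ| ≤ K * (k:ℝ)^(-(μ+1)) := by
  refine ⟨|μ| * 2 ^ |μ-1| * 2 ^ |μ|, by positivity, ?_⟩
  intro k hk
  have hk2 : (2:ℝ) ≤ (k:ℝ) := by exact_mod_cast hk
  have hk0 : (0:ℝ) < (k:ℝ) := by linarith
  have hk1 : (0:ℝ) < (k:ℝ) - 1 := by linarith
  have hmvt := exists_hasDerivAt_eq_slope (fun x => x ^ μ) (fun x => μ * x ^ (μ - 1))
    (by linarith : (k:ℝ) - 1 < (k:ℝ))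
    (fun x hx => (Real.continuousAt_rpow_const x μ
      (Or.inl (by rcases hx with ⟨h1, _⟩; intro h; rw [h] at h1; linarith))).continuousWithinAt)
    (fun x hx => Real.hasDerivAt_rpow_const
      (Or.inl (by rcases hx with ⟨h1, _⟩; intro h; rw [h] at h1; linarith)))
  obtain ⟨ξ, hξ, hξeq⟩ := hmvt
  have hξ0 : 0 < ξ := lt_trans hk1 hξ.1
  have hξeq' : μ * ξ ^ (μ-1) = (((k:ℝ))^μ - ((k:ℝ)-1)^μ) / ((k:ℝ) - ((k:ℝ)-1)) := hξeq
  have hslope : (k:ℝ) ^ μ - ((k:ℝ)-1) ^ μ = μ * ξ ^ (μ-1) := by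
    rw [hξeq']; field_simp; ring
  have hd1 : (0:ℝ) < (k:ℝ) ^ μ := Real.rpow_pos_of_pos hk0 μ
  have hd0 : (0:ℝ) < ((k:ℝ)-1) ^ μ := Real.rpow_pos_of_pos hk1 μ
  have heq : 1/((k:ℝ))^μ - 1/((k:ℝ)-1)^μ
      = -(μ * ξ ^ (μ-1)) * ((k:ℝ)^μ)⁻¹ * (((k:ℝ)-1)^μ)⁻¹ := by
    rw [← hslope]; field_simp; ring
  rw [heq]
  rw [abs_mul, abs_mul, abs_neg, abs_mul]
  have hξb : ξ ^ (μ-1) ≤ 2 ^ |μ-1| * (k:ℝ) ^ (μ-1) :=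
    lemA (μ-1) ξ (k:ℝ) hξ0 (by linarith [hξ.1]) hξ.2.le
  have hkb : (((k:ℝ)-1)) ^ (-μ) ≤ 2 ^ |(-μ)| * (k:ℝ) ^ (-μ) :=
    lemA (-μ) ((k:ℝ)-1) (k:ℝ) hk1 (by linarith) (by linarith)
  rw [abs_neg] at hkb
  have e0 : |(((k:ℝ)-1)^μ)⁻¹| = ((k:ℝ)-1) ^ (-μ) := by
    rw [abs_of_pos (by positivity), ← Real.rpow_neg hk1.le]
  have e1 : |((k:ℝ)^μ)⁻¹| = ((k:ℝ)) ^ (-μ) := by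
    rw [abs_of_pos (by positivity), ← Real.rpow_neg hk0.le]
  have e2 : |ξ ^ (μ-1)| = ξ ^ (μ-1) := abs_of_pos (Real.rpow_pos_of_pos hξ0 _)
  rw [e0, e1, e2]
  have hcomb : (k:ℝ)^(μ-1) * (k:ℝ)^(-μ) * (k:ℝ)^(-μ) = (k:ℝ)^(-(μ+1)) := by
    rw [← Real.rpow_add hk0, ← Real.rpow_add hk0]; congr 1; ring
  have p1 : (0:ℝ) ≤ (k:ℝ)^(-μ) := Real.rpow_nonneg hk0.le _
  have p3 : (0:ℝ) ≤ ((k:ℝ)-1)^(-μ) := Real.rpow_nonneg hk1.le _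
  have hAB := mul_le_mul hξb hkb p3 (by positivity)
  calc |μ| * ξ^(μ-1) * ((k:ℝ)^(-μ)) * (((k:ℝ)-1)^(-μ))
      = (|μ| * (k:ℝ)^(-μ)) * (ξ^(μ-1) * (((k:ℝ)-1)^(-μ))) := by ring
    _ ≤ (|μ| * (k:ℝ)^(-μ)) * ((2 ^ |μ-1| * (k:ℝ)^(μ-1)) * (2 ^ |μ| * (k:ℝ)^(-μ))) :=
        mul_le_mul_of_nonneg_left hAB (by positivity)
    _ = (|μ| * 2 ^ |μ-1| * 2 ^ |μ|) * ((k:ℝ)^(μ-1) * (k:ℝ)^(-μ) * (k:ℝ)^(-μ)) := by ring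
    _ = |μ| * 2 ^ |μ-1| * 2 ^ |μ| * (k:ℝ)^(-(μ+1)) := by rw [hcomb]

/-- One step of extrapolation accelerates linearly convergent sequences: if
`F_k = L + c g^k / k^μ + O(|g|^k / k^{μ+1})` and `α = 1/(1-g)`, `β = g/(g-1)`, then
`G = α F + β S F` satisfies `G_k - L ∈ O(|g|^k / k^{μ+1})`. -/
theorem stmt_11 (g : ℂ) (hg0 : 0 < ‖g‖) (hg1 : ‖g‖ < 1) (hgne : g ≠ 1)
    (μ : ℝ) (c L : ℂ) (F : ℕ → ℂ) (C : ℝ) (hC : 0 ≤ C)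
    (hF : ∀ k : ℕ, 1 ≤ k →
      ‖F k - L - c * g ^ k / ((((k : ℝ) ^ μ : ℝ)) : ℂ)‖ ≤ C * (‖g‖) ^ k / (k : ℝ) ^ (μ + 1))
    (α β : ℂ) (hα : α = 1 / (1 - g)) (hβ : β = g / (g - 1))
    (G : ℕ → ℂ) (hG : G = fun k => α * F k + β * (if k = 0 then 0 else F (k - 1))) :
    ∃ C' : ℝ, 0 ≤ C' ∧ ∀ k : ℕ, 1 ≤ k →
      ‖G k - L‖ ≤ C' * (‖g‖) ^ k / (k : ℝ) ^ (μ + 1) := by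
  obtain ⟨K, hK0, hK⟩ := lemB μ
  have hgz : g ≠ 0 := by
    intro h; rw [h] at hg0; simp at hg0
  have h1g : (1:ℂ) - g ≠ 0 := sub_ne_zero.mpr (Ne.symm hgne)
  have hg1' : g - 1 ≠ 0 := sub_ne_zero.mpr hgne
  have hαβ : α + β = 1 := by rw [hα, hβ]; field_simp; ring
  have hβα : β = -(g * α) := by rw [hα, hβ]; field_simp; ring
  set A : ℝ := ‖g‖ with hA
  set C1 : ℝ := ‖G 1 - L‖ / A with hC1
  set C2 : ℝ := ‖α‖ * C + ‖β‖ * C * (2 ^ |μ+1| / A) + ‖α‖ * ‖c‖ * K with hC2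
  have hC2' : 0 ≤ C2 := by positivity
  refine ⟨max C1 C2, le_trans (by positivity : (0:ℝ) ≤ C1) (le_max_left _ _), ?_⟩
  intro k hk
  rcases eq_or_lt_of_le hk with h | h
  · -- k = 1
    subst h
    simp only [Nat.cast_one, Real.one_rpow, pow_one, div_one]
    calc ‖G 1 - L‖ = C1 * A := (div_mul_cancel₀ _ hg0.ne').symm
      _ ≤ max C1 C2 * A := mul_le_mul_of_nonneg_right (le_max_left _ _) hg0.le
  · -- k ≥ 2
    obtain ⟨n, rfl⟩ : ∃ n, k = n + 1 := ⟨k - 1, (Nat.succ_pred_eq_of_pos (by omega)).symm⟩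
    have hn1 : 1 ≤ n := by omega
    have hn0 : (0:ℝ) < (n:ℝ) := by exact_mod_cast hn1
    have hn0' : (1:ℝ) ≤ (n:ℝ) := by exact_mod_cast hn1
    have hncast : (((n+1:ℕ)):ℝ) = (n:ℝ) + 1 := by push_cast; ring
    have hd1 : (0:ℝ) < ((n:ℝ)+1) ^ μ := Real.rpow_pos_of_pos (by linarith) μ
    have hd0 : (0:ℝ) < (n:ℝ) ^ μ := Real.rpow_pos_of_pos hn0 μ
    have hD1 : ((((n:ℝ)+1) ^ μ : ℝ) : ℂ) ≠ 0 := by exact_mod_cast hd1.ne'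
    have hD0 : (((n:ℝ) ^ μ : ℝ) : ℂ) ≠ 0 := by exact_mod_cast hd0.ne'
    have hz : β * g ^ n + α * g ^ (n+1) = 0 := by rw [hβα, pow_succ]; ring
    have hGk : G (n+1) = α * F (n+1) + β * F n := by simp [hG]
    have key : G (n+1) - L
        = α * (F (n+1) - L - c * g ^ (n+1) / ((((n:ℝ)+1) ^ μ : ℝ) : ℂ))
        + β * (F n - L - c * g ^ n / (((n:ℝ) ^ μ : ℝ) : ℂ))
        + α * c * g ^ (n+1) * (1 / ((((n:ℝ)+1) ^ μ : ℝ) : ℂ) - 1 / (((n:ℝ) ^ μ : ℝ) : ℂ)) := by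
      rw [hGk]
      linear_combination L * hαβ + (c / (((n:ℝ) ^ μ : ℝ) : ℂ)) * hz
    -- positivity of target quantities
    have hp1 : (0:ℝ) < ((n:ℝ)+1) ^ (μ+1) := Real.rpow_pos_of_pos (by linarith) _
    have hp0 : (0:ℝ) < (n:ℝ) ^ (μ+1) := Real.rpow_pos_of_pos hn0 _
    have hAp : (0:ℝ) < A ^ (n+1) := pow_pos hg0 _
    -- term 1 bound
    have hF1 := hF (n+1) (by omega)
    rw [hncast] at hF1
    -- term 2 bound
    have hF0 := hF n hn1
    have ht2 : C * A ^ n / (n:ℝ) ^ (μ+1) ≤ C * (2 ^ |μ+1| / A) * (A ^ (n+1) / ((n:ℝ)+1) ^ (μ+1)) := by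
      have hrp : (n:ℝ) ^ (-(μ+1)) ≤ 2 ^ |μ+1| * ((n:ℝ)+1) ^ (-(μ+1)) := by
        have := lemA (-(μ+1)) (n:ℝ) ((n:ℝ)+1) hn0 (by linarith) (by linarith)
        rwa [abs_neg] at this
      have e1 : C * A ^ n / (n:ℝ) ^ (μ+1) = (C * A ^ n) * (n:ℝ) ^ (-(μ+1)) := by
        rw [Real.rpow_neg hn0.le]; ring
      have e2 : C * (2 ^ |μ+1| / A) * (A ^ (n+1) / ((n:ℝ)+1) ^ (μ+1))
          = (C * A ^ n) * (2 ^ |μ+1| * ((n:ℝ)+1) ^ (-(μ+1))) := by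
        rw [Real.rpow_neg (by linarith : (0:ℝ) ≤ (n:ℝ)+1), pow_succ]
        field_simp
      rw [e1, e2]
      exact mul_le_mul_of_nonneg_left hrp (by positivity)
    -- term 3 bound
    have ht3 : ‖(1 / ((((n:ℝ)+1) ^ μ : ℝ) : ℂ) - 1 / (((n:ℝ) ^ μ : ℝ) : ℂ))‖
        ≤ K * ((n:ℝ)+1) ^ (-(μ+1)) := by
      have hcast : (1 / ((((n:ℝ)+1) ^ μ : ℝ) : ℂ) - 1 / (((n:ℝ) ^ μ : ℝ) : ℂ))
          = (((1 / ((n:ℝ)+1) ^ μ - 1 / (n:ℝ) ^ μ : ℝ)) : ℂ) := by push_cast; ring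
      rw [hcast, Complex.norm_real]
      have := hK (n+1) (by omega)
      rw [hncast] at this
      simpa using this
    -- assemble
    rw [key]
    have htri : ‖α * (F (n+1) - L - c * g ^ (n+1) / ((((n:ℝ)+1) ^ μ : ℝ) : ℂ))
        + β * (F n - L - c * g ^ n / (((n:ℝ) ^ μ : ℝ) : ℂ))
        + α * c * g ^ (n+1) * (1 / ((((n:ℝ)+1) ^ μ : ℝ) : ℂ) - 1 / (((n:ℝ) ^ μ : ℝ) : ℂ))‖
        ≤ ‖α‖ * ‖F (n+1) - L - c * g ^ (n+1) / ((((n:ℝ)+1) ^ μ : ℝ) : ℂ)‖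
        + ‖β‖ * ‖F n - L - c * g ^ n / (((n:ℝ) ^ μ : ℝ) : ℂ)‖
        + ‖α‖ * ‖c‖ * A ^ (n+1) * ‖(1 / ((((n:ℝ)+1) ^ μ : ℝ) : ℂ) - 1 / (((n:ℝ) ^ μ : ℝ) : ℂ))‖ := by
      refine le_trans norm_add₃_le (le_of_eq ?_)
      simp only [norm_mul, norm_pow, ← hA]
    rw [hncast]
    have hX : (0:ℝ) ≤ A ^ (n+1) / ((n:ℝ)+1) ^ (μ+1) := by positivity
    calc ‖α * (F (n+1) - L - c * g ^ (n+1) / ((((n:ℝ)+1) ^ μ : ℝ) : ℂ))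
        + β * (F n - L - c * g ^ n / (((n:ℝ) ^ μ : ℝ) : ℂ))
        + α * c * g ^ (n+1) * (1 / ((((n:ℝ)+1) ^ μ : ℝ) : ℂ) - 1 / (((n:ℝ) ^ μ : ℝ) : ℂ))‖
        ≤ ‖α‖ * ‖F (n+1) - L - c * g ^ (n+1) / ((((n:ℝ)+1) ^ μ : ℝ) : ℂ)‖
        + ‖β‖ * ‖F n - L - c * g ^ n / (((n:ℝ) ^ μ : ℝ) : ℂ)‖
        + ‖α‖ * ‖c‖ * A ^ (n+1) * ‖(1 / ((((n:ℝ)+1) ^ μ : ℝ) : ℂ) - 1 / (((n:ℝ) ^ μ : ℝ) : ℂ))‖ := htri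
      _ ≤ ‖α‖ * (C * A ^ (n+1) / ((n:ℝ)+1) ^ (μ+1))
        + ‖β‖ * (C * (2 ^ |μ+1| / A) * (A ^ (n+1) / ((n:ℝ)+1) ^ (μ+1)))
        + ‖α‖ * ‖c‖ * A ^ (n+1) * (K * ((n:ℝ)+1) ^ (-(μ+1))) := by
          gcongr <;> first
            | exact hF1
            | exact le_trans hF0 ht2
            | exact ht3
      _ = C2 * (A ^ (n+1) / ((n:ℝ)+1) ^ (μ+1)) := by
          rw [hC2, Real.rpow_neg (by linarith : (0:ℝ) ≤ (n:ℝ)+1)]; ring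
      _ ≤ max C1 C2 * (A ^ (n+1) / ((n:ℝ)+1) ^ (μ+1)) :=
          mul_le_mul_of_nonneg_right (le_max_right _ _) hX
      _ = max C1 C2 * A ^ (n+1) / ((n:ℝ)+1) ^ (μ+1) := (mul_div_assoc _ _ _).symm
end

section
/- Let x ∈ ℂ with x ≠ 2, set α = −x/2, and define W : ℕ → ℂ by W_n = (∑_{k=0}^{n} (n choose k) α^{n−k} x^{k+1}/(k+1)²) / (1 + α)^{n+1}. Then W_0 = x/(1 − x/2), W_1 = −x²/(4(1 − x/2)²), W_2 = x³/(9(1 − x/2)³), and for every n ∈ ℕ, (x−2)³ (n+4)² W_{n+3} = −x³ (n+1)(n+2) W_n + x² (x−2) (n+2)² W_{n+1} + x (x−2)² (n+3)(n+4) W_{n+2}. -/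
open Finset

noncomputable def dilogF (x : ℂ) (m k : ℕ) : ℂ :=
  (m.choose k : ℂ) * (-x / 2) ^ (m - k) * x ^ (k + 1) / ((k : ℂ) + 1) ^ 2

noncomputable def dilogG (x : ℂ) (n j : ℕ) : ℂ :=
  -16 * ((n + 2).choose j : ℂ) * (-x / 2) ^ (n + 3 - j) * x ^ (j + 1)

noncomputable def dilogH (x : ℂ) (n k : ℕ) : ℂ :=
  -8 * ((n : ℂ) + 4) ^ 2 * dilogF x (n + 3) k
    + x ^ 3 * ((n : ℂ) + 1) * ((n : ℂ) + 2) * dilogF x n k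
    + 2 * x ^ 2 * ((n : ℂ) + 2) ^ 2 * dilogF x (n + 1) k
    - 4 * x * ((n : ℂ) + 3) * ((n : ℂ) + 4) * dilogF x (n + 2) k

lemma choose_two_cast (n : ℕ) :
    (((n + 2).choose n : ℕ) : ℂ) = ((n : ℂ) + 1) * ((n : ℂ) + 2) / 2 := by
  induction n with
  | zero => norm_num
  | succ m ih =>
      have h : (m + 3).choose (m + 1) = (m + 2).choose m + (m + 2).choose (m + 1) :=
        Nat.choose_succ_succ (m + 2) m
      have h2 : (m + 2).choose (m + 1) = m + 2 := Nat.choose_succ_self_right (m + 1)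
      show (((m + 3).choose (m + 1) : ℕ) : ℂ) = _
      rw [h, h2]
      push_cast [ih]
      ring

lemma dilog_base (x : ℂ) (n : ℕ) : dilogH x n 0 = dilogG x n 0 := by
  simp only [dilogH, dilogF, dilogG, Nat.choose_zero_right, Nat.sub_zero, Nat.cast_one,
    Nat.cast_zero]
  ring

lemma dilog_step (x : ℂ) (n k : ℕ) :
    dilogH x n (k + 1) = dilogG x n (k + 1) - dilogG x n k := by
  rcases le_or_gt (k + 1) n with h | h
  · obtain ⟨m, rfl⟩ := Nat.exists_eq_add_of_le h
    simp only [dilogH, dilogF, dilogG]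
    rw [show k + 1 + m - (k + 1) = m by omega, show k + 1 + m + 1 - (k + 1) = m + 1 by omega,
      show k + 1 + m + 2 - (k + 1) = m + 2 by omega,
      show k + 1 + m + 3 - (k + 1) = m + 3 by omega,
      show k + 1 + m + 3 - k = m + 4 by omega]
    have c1 : (((k + 1 + m + 1).choose (k + 1) : ℕ) : ℂ) * ((m : ℂ) + 1)
        = (((k + 1 + m).choose (k + 1) : ℕ) : ℂ) * ((k : ℂ) + 1 + (m : ℂ) + 1) := by
      have h := Nat.choose_mul_succ_eq (k + 1 + m) (k + 1)
      rw [show k + 1 + m + 1 - (k + 1) = m + 1 by omega] at h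
      exact_mod_cast h.symm
    have c2 : (((k + 1 + m + 2).choose (k + 1) : ℕ) : ℂ) * ((m : ℂ) + 2)
        = (((k + 1 + m + 1).choose (k + 1) : ℕ) : ℂ) * ((k : ℂ) + 1 + (m : ℂ) + 2) := by
      have h := Nat.choose_mul_succ_eq (k + 1 + m + 1) (k + 1)
      rw [show k + 1 + m + 1 + 1 = k + 1 + m + 2 by omega] at h
      rw [show k + 1 + m + 2 - (k + 1) = m + 2 by omega] at h
      exact_mod_cast h.symm
    have c3 : (((k + 1 + m + 3).choose (k + 1) : ℕ) : ℂ) * ((m : ℂ) + 3)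
        = (((k + 1 + m + 2).choose (k + 1) : ℕ) : ℂ) * ((k : ℂ) + 1 + (m : ℂ) + 3) := by
      have h := Nat.choose_mul_succ_eq (k + 1 + m + 2) (k + 1)
      rw [show k + 1 + m + 2 + 1 = k + 1 + m + 3 by omega] at h
      rw [show k + 1 + m + 3 - (k + 1) = m + 3 by omega] at h
      exact_mod_cast h.symm
    have c4 : (((k + 1 + m + 2).choose (k + 1) : ℕ) : ℂ) * ((k : ℂ) + 1)
        = (((k + 1 + m + 2).choose k : ℕ) : ℂ) * ((m : ℂ) + 3) := by
      have h := Nat.choose_succ_right_eq (k + 1 + m + 2) k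
      rw [show k + 1 + m + 2 - k = m + 3 by omega] at h
      exact_mod_cast h
    have hm1 : ((m : ℂ) + 1) ≠ 0 := Nat.cast_add_one_ne_zero m
    have hm2 : ((m : ℂ) + 2) ≠ 0 := by
      have h := Nat.cast_add_one_ne_zero (R := ℂ) (m + 1); push_cast at h
      intro hc; exact h (by linear_combination hc)
    have hm3 : ((m : ℂ) + 3) ≠ 0 := by
      have h := Nat.cast_add_one_ne_zero (R := ℂ) (m + 2); push_cast at h
      intro hc; exact h (by linear_combination hc)
    have hk2 : ((k : ℂ) + 1 + 1) ≠ 0 := by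
      have h := Nat.cast_add_one_ne_zero (R := ℂ) (k + 1); push_cast at h
      intro hc; exact h (by linear_combination hc)
    have pa : ∀ j : ℕ, (-x / 2 : ℂ) ^ (m + j) = (-x / 2) ^ m * (-x / 2) ^ j :=
      fun j => pow_add _ m j
    rw [pa 1, pa 2, pa 3, pa 4, pow_succ x (k + 1)]
    push_cast
    generalize (-x / 2 : ℂ) ^ m = a
    generalize (x : ℂ) ^ (k + 1) = X
    have hP : (((k : ℂ) + 1 + 1) ^ 2) ≠ 0 := pow_ne_zero _ hk2
    have hM : (((m : ℂ) + 1) * ((m : ℂ) + 2) * ((m : ℂ) + 3)) ≠ 0 :=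
      mul_ne_zero (mul_ne_zero hm1 hm2) hm3
    simp only [← mul_div_assoc]
    rw [← add_div, ← add_div, div_sub_div_same, div_eq_iff hP]
    refine mul_left_cancel₀ hM ?_
    linear_combination
      (-8 * ((k : ℂ) + 1 + (m : ℂ) + 4) ^ 2 * a * (-x / 2) ^ 3 * X * x) *
        ((((m : ℂ) + 1) * ((m : ℂ) + 2)) * c3
          + (((k : ℂ) + 1 + (m : ℂ) + 3) * ((m : ℂ) + 1)) * c2
          + (((k : ℂ) + 1 + (m : ℂ) + 3) * ((k : ℂ) + 1 + (m : ℂ) + 2)) * c1)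
      + (2 * x ^ 2 * ((k : ℂ) + 1 + (m : ℂ) + 2) ^ 2 * a * (-x / 2) * X * x) *
        ((((m : ℂ) + 2) * ((m : ℂ) + 3)) * c1)
      + (-4 * x * ((k : ℂ) + 1 + (m : ℂ) + 3) * ((k : ℂ) + 1 + (m : ℂ) + 4) * a * (-x / 2) ^ 2 * X * x
          + 16 * (((k : ℂ) + 1 + 1) ^ 2) * a * (-x / 2) ^ 3 * X * x) *
        (((m : ℂ) + 3) * (((m : ℂ) + 1) * c2 + ((k : ℂ) + 1 + (m : ℂ) + 2) * c1))
      + (-16 * (((k : ℂ) + 1 + 1) ^ 2) * a * (-x / 2) ^ 4 * X) *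
        (-(((m : ℂ) + 1) * ((m : ℂ) + 2)) * c4
          + ((k : ℂ) + 1) * (((m : ℂ) + 1) * c2 + ((k : ℂ) + 1 + (m : ℂ) + 2) * c1))
  · obtain ⟨d, rfl⟩ := Nat.exists_eq_add_of_le (show n ≤ k by omega)
    match d with
    | 0 =>
        simp only [dilogH, dilogF, dilogG, Nat.add_zero]
        rw [show n + 3 - (n + 1) = 2 by omega, show n - (n + 1) = 0 by omega,
          show n + 1 - (n + 1) = 0 by omega, show n + 2 - (n + 1) = 1 by omega,
          show n + 3 - n = 3 by omega,
          show (n + 3).choose (n + 1) = (n + 2).choose n + (n + 2).choose (n + 1) from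
            Nat.choose_succ_succ (n + 2) n,
          Nat.choose_succ_self, Nat.choose_self, Nat.choose_succ_self_right]
        have hk2 : ((n : ℂ) + 1 + 1) ≠ 0 := by
          have h := Nat.cast_add_one_ne_zero (R := ℂ) (n + 1); push_cast at h
          intro hc; exact h (by linear_combination hc)
        have hP : (((n : ℂ) + 1 + 1) ^ 2) ≠ 0 := pow_ne_zero _ hk2
        push_cast [choose_two_cast]
        simp only [← mul_div_assoc]
        rw [← add_div, ← add_div, div_sub_div_same, div_eq_iff hP]
        ring
    | 1 =>
        simp only [dilogH, dilogF, dilogG]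
        rw [show n + 3 - (n + 1 + 1) = 1 by omega, show n - (n + 1 + 1) = 0 by omega,
          show n + 1 - (n + 1 + 1) = 0 by omega, show n + 2 - (n + 1 + 1) = 0 by omega,
          show n + 3 - (n + 1) = 2 by omega,
          show n + 1 + 1 = n + 2 by omega,
          show (n + 3).choose (n + 2) = n + 3 from Nat.choose_succ_self_right (n + 2),
          show n.choose (n + 2) = 0 from Nat.choose_eq_zero_of_lt (by omega),
          show (n + 1).choose (n + 2) = 0 from Nat.choose_eq_zero_of_lt (by omega),
          Nat.choose_self,
          show (n + 2).choose (n + 1) = n + 2 from Nat.choose_succ_self_right (n + 1)]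
        have hk3 : ((n : ℂ) + 2 + 1) ≠ 0 := by
          have h := Nat.cast_add_one_ne_zero (R := ℂ) (n + 2); push_cast at h
          intro hc; exact h (by linear_combination hc)
        have hP : (((n : ℂ) + 2 + 1) ^ 2) ≠ 0 := pow_ne_zero _ hk3
        push_cast
        simp only [← mul_div_assoc]
        rw [← add_div, ← add_div, div_sub_div_same, div_eq_iff hP]
        ring
    | 2 =>
        simp only [dilogH, dilogF, dilogG]
        rw [show n + 2 + 1 = n + 3 by omega,
          show n + 3 - (n + 3) = 0 by omega, show n - (n + 3) = 0 by omega,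
          show n + 1 - (n + 3) = 0 by omega, show n + 2 - (n + 3) = 0 by omega,
          show n + 3 - (n + 2) = 1 by omega,
          Nat.choose_self,
          show n.choose (n + 3) = 0 from Nat.choose_eq_zero_of_lt (by omega),
          show (n + 1).choose (n + 3) = 0 from Nat.choose_eq_zero_of_lt (by omega),
          show (n + 2).choose (n + 3) = 0 from Nat.choose_eq_zero_of_lt (by omega)]
        have hk4 : ((n : ℂ) + 3 + 1) ≠ 0 := by
          have h := Nat.cast_add_one_ne_zero (R := ℂ) (n + 3); push_cast at h
          intro hc; exact h (by linear_combination hc)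
        have hP : (((n : ℂ) + 3 + 1) ^ 2) ≠ 0 := pow_ne_zero _ hk4
        push_cast [Nat.choose_self]
        simp only [← mul_div_assoc]
        rw [← add_div, ← add_div, div_sub_div_same, div_eq_iff hP]
        ring
    | (d + 3) =>
        simp only [dilogH, dilogF, dilogG]
        rw [show (n + 3).choose (n + (d + 3) + 1) = 0 from Nat.choose_eq_zero_of_lt (by omega),
          show n.choose (n + (d + 3) + 1) = 0 from Nat.choose_eq_zero_of_lt (by omega),
          show (n + 1).choose (n + (d + 3) + 1) = 0 from Nat.choose_eq_zero_of_lt (by omega),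
          show (n + 2).choose (n + (d + 3) + 1) = 0 from Nat.choose_eq_zero_of_lt (by omega),
          show (n + 2).choose (n + (d + 3)) = 0 from Nat.choose_eq_zero_of_lt (by omega)]
        push_cast
        ring

lemma dilog_partial (x : ℂ) (n : ℕ) : ∀ K : ℕ,
    ∑ k ∈ Finset.range (K + 1), dilogH x n k = dilogG x n K := by
  intro K
  induction K with
  | zero => simpa using dilog_base x n
  | succ K ih =>
      rw [Finset.sum_range_succ, ih, dilog_step]
      ring

lemma dilog_total (x : ℂ) (n : ℕ) : ∑ k ∈ Finset.range (n + 4), dilogH x n k = 0 := by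
  have h := dilog_partial x n (n + 3)
  rw [show n + 4 = n + 3 + 1 from rfl, h, dilogG,
    show (n + 2).choose (n + 3) = 0 from Nat.choose_eq_zero_of_lt (by omega)]
  push_cast
  ring

lemma dilog_Srec (x : ℂ) (n : ℕ) :
    -8 * ((n : ℂ) + 4) ^ 2 * ∑ k ∈ Finset.range (n + 3 + 1), dilogF x (n + 3) k
      + x ^ 3 * ((n : ℂ) + 1) * ((n : ℂ) + 2) * ∑ k ∈ Finset.range (n + 1), dilogF x n k
      + 2 * x ^ 2 * ((n : ℂ) + 2) ^ 2 * ∑ k ∈ Finset.range (n + 1 + 1), dilogF x (n + 1) k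
      - 4 * x * ((n : ℂ) + 3) * ((n : ℂ) + 4) * ∑ k ∈ Finset.range (n + 2 + 1), dilogF x (n + 2) k
      = 0 := by
  have hz : ∀ m k : ℕ, m < k → dilogF x m k = 0 := by
    intro m k hk
    simp [dilogF, Nat.choose_eq_zero_of_lt hk]
  have ext : ∀ m : ℕ, m + 1 ≤ n + 4 →
      (∑ k ∈ Finset.range (m + 1), dilogF x m k) = ∑ k ∈ Finset.range (n + 4), dilogF x m k := by
    intro m hm
    refine Finset.sum_subset (Finset.range_subset_range.2 hm) ?_
    intro k _ hk
    exact hz m k (by simpa using hk)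
  rw [ext n (by omega), ext (n + 1) (by omega), ext (n + 2) (by omega), ext (n + 3) (by omega)]
  rw [Finset.mul_sum, Finset.mul_sum, Finset.mul_sum, Finset.mul_sum,
    ← Finset.sum_add_distrib, ← Finset.sum_add_distrib, ← Finset.sum_sub_distrib]
  exact dilog_total x n

/-- Initial values and third-order recurrence for the summand
`W_n = (B_{-x/2,1} Q)_n / (1 - x/2)^{n+1}` of the transformed dilogarithm series. -/
theorem stmt_15 (x : ℂ) (hx : x ≠ 2) (α : ℂ) (hα : α = -x / 2) (W : ℕ → ℂ)
    (hW : W = fun (n : ℕ) =>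
      (∑ k ∈ Finset.range (n + 1),
        (n.choose k : ℂ) * α ^ (n - k) * x ^ (k + 1) / ((k : ℂ) + 1) ^ 2) / (1 + α) ^ (n + 1)) :
    W 0 = x / (1 - x / 2) ∧
    W 1 = -x ^ 2 / (4 * (1 - x / 2) ^ 2) ∧
    W 2 = x ^ 3 / (9 * (1 - x / 2) ^ 3) ∧
    ∀ n : ℕ, (x - 2) ^ 3 * ((n : ℂ) + 4) ^ 2 * W (n + 3)
      = -x ^ 3 * ((n : ℂ) + 1) * ((n : ℂ) + 2) * W n
        + x ^ 2 * (x - 2) * ((n : ℂ) + 2) ^ 2 * W (n + 1)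
        + x * (x - 2) ^ 2 * ((n : ℂ) + 3) * ((n : ℂ) + 4) * W (n + 2) := by
  subst hα
  have hu : (1 - x / 2 : ℂ) ≠ 0 := fun h => hx (by linear_combination (-2 : ℂ) * h)
  have hWm : ∀ m : ℕ, W m = (∑ k ∈ Finset.range (m + 1), dilogF x m k) / (1 - x / 2) ^ (m + 1) := by
    intro m
    rw [hW]
    simp only [dilogF]
    rw [show (1 + -x / 2 : ℂ) = 1 - x / 2 from by ring]
  refine ⟨?_, ?_, ?_, ?_⟩
  · rw [hWm 0]
    simp [dilogF, Finset.sum_range_one]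
  · rw [hWm 1, Finset.sum_range_succ, Finset.sum_range_one]
    simp only [dilogF]
    rw [div_eq_div_iff (pow_ne_zero _ hu) (mul_ne_zero (by norm_num) (pow_ne_zero 2 hu))]
    push_cast [Nat.choose]
    ring
  · rw [hWm 2, Finset.sum_range_succ, Finset.sum_range_succ, Finset.sum_range_one]
    simp only [dilogF]
    rw [div_eq_div_iff (pow_ne_zero _ hu) (mul_ne_zero (by norm_num) (pow_ne_zero 3 hu))]
    push_cast [Nat.choose]
    ring
  · intro n
    have hS := dilog_Srec x n
    have hu4 : (1 - x / 2 : ℂ) ^ (n + 4) ≠ 0 := pow_ne_zero _ hu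
    have hnorm : ∀ (p q : ℕ) (S : ℂ), p + q = n + 4 →
        S / (1 - x / 2) ^ p = S * (1 - x / 2) ^ q / (1 - x / 2) ^ (n + 4) := by
      intro p q S h
      rw [← h, pow_add, mul_div_mul_right _ _ (pow_ne_zero q hu)]
    rw [hWm n, hWm (n + 1), hWm (n + 2), hWm (n + 3),
      hnorm (n + 1) 3 _ (by omega), hnorm (n + 1 + 1) 2 _ (by omega),
      hnorm (n + 2 + 1) 1 _ (by omega), hnorm (n + 3 + 1) 0 _ (by omega)]
    simp only [← mul_div_assoc]
    rw [← add_div, ← add_div, div_eq_div_iff hu4 hu4]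
    linear_combination ((1 - x / 2 : ℂ) ^ (n + 4) * (1 - x / 2) ^ 3) * hS
end

section
/- For every x ∈ ℂ that does not lie on the real interval [1, ∞) (i.e., it is not the case that Im(x) = 0 and Re(x) ≥ 1), there exists α ∈ ℂ with α ≠ −1, α ≠ −x, and α ≠ 0 such that max(|α/(α+1)|, |(α+x)/(α+1)|) < 1. -/
lemma abs_div_lt_one' {a b : ℂ} (hb : b ≠ 0) (h : Complex.normSq a < Complex.normSq b) :
    ‖a / b‖ < 1 := by
  rw [norm_div, div_lt_one (by simpa using hb : 0 < ‖b‖)]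
  rw [Complex.norm_def, Complex.norm_def]
  exact Real.sqrt_lt_sqrt (Complex.normSq_nonneg a) h

/-- For every `x ∈ ℂ \ [1, ∞)` there exists `α` (with `α ≠ -1`, `α ≠ -x`, `α ≠ 0`) such
that `max(|α/(α+1)|, |(α+x)/(α+1)|) < 1`. -/
theorem stmt_18 (x : ℂ) (hx : ¬(x.im = 0 ∧ 1 ≤ x.re)) :
    ∃ α : ℂ, α ≠ -1 ∧ α ≠ -x ∧ α ≠ 0 ∧
      max (‖α / (α + 1)‖) (‖(α + x) / (α + 1)‖) < 1 := by
  by_cases him : x.im = 0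
  · have hre : x.re < 1 := by
      by_contra h; exact hx ⟨him, le_of_not_gt h⟩
    have habs := abs_nonneg x.re
    refine ⟨((|x.re| + 1 : ℝ) : ℂ), ?_, ?_, ?_, ?_⟩
    · intro h
      have := congrArg Complex.re h
      simp at this
      nlinarith
    · intro h
      have := congrArg Complex.re h
      simp at this
      nlinarith [neg_abs_le x.re]
    · intro h
      have := congrArg Complex.re h
      simp at this
      nlinarith
    · have hne : ((|x.re| + 1 : ℝ) : ℂ) + 1 ≠ 0 := by
        intro h
        have := congrArg Complex.re h
        simp at this
        nlinarith
      rw [max_lt_iff]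
      constructor
      · apply abs_div_lt_one' hne
        simp [Complex.normSq_apply]
        nlinarith
      · apply abs_div_lt_one' hne
        simp [Complex.normSq_apply, him]
        rcases abs_cases x.re with ⟨h1, h2⟩ | ⟨h1, h2⟩ <;> nlinarith
  · set t : ℝ := Complex.normSq x / (2 * x.im ^ 2) + 2 with ht
    have him2 : 0 < x.im ^ 2 := by positivity
    have htpos : 2 ≤ t := by
      have h0 : 0 ≤ Complex.normSq x / (2 * x.im ^ 2) :=
        div_nonneg (Complex.normSq_nonneg x) (by positivity)
      rw [ht]; linarith
    have hkey : 2 * x.im ^ 2 * t = Complex.normSq x + 4 * x.im ^ 2 := by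
      rw [ht]; field_simp; ring
    have hnsq : Complex.normSq x = x.re ^ 2 + x.im ^ 2 := by
      simp [Complex.normSq_apply]; ring
    refine ⟨⟨0, -x.im * t⟩, ?_, ?_, ?_, ?_⟩
    · intro h
      have := congrArg Complex.im h
      simp at this
      rcases this with h' | h' <;> [exact him h'; nlinarith]
    · intro h
      have h2 := congrArg Complex.im h
      simp at h2
      have h3 : x.im * (t - 1) = 0 := by linear_combination h2
      rcases mul_eq_zero.mp h3 with h' | h'
      · exact him h'
      · linarith
    · intro h
      have := congrArg Complex.im h
      simp at this
      rcases this with h' | h' <;> [exact him h'; nlinarith]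
    · have hne : (⟨0, -x.im * t⟩ : ℂ) + 1 ≠ 0 := by
        intro h
        have := congrArg Complex.re h
        simp at this
      rw [max_lt_iff]
      constructor
      · apply abs_div_lt_one' hne
        simp [Complex.normSq_apply]
      · apply abs_div_lt_one' hne
        simp [Complex.normSq_apply]
        nlinarith [hkey, hnsq, him2]
end

section
/- Let x ∈ ℂ with |x| < 1, set α = −x/2, and define W : ℕ → ℂ by W_n = (∑_{k=0}^{n} (n choose k) α^{n−k} x^{k+1}/(k+1)²) / (1 + α)^{n+1}. Then the sequence W is summable and ∑_{n=0}^{∞} W_n = ∑_{k=0}^{∞} x^{k+1}/(k+1)². -/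
open MeasureTheory

lemma real_log_int (k : ℕ) :
    IntegrableOn (fun t : ℝ => t ^ k * (-Real.log t)) (Set.Ioc 0 1) volume ∧
    ∫ t in Set.Ioc (0:ℝ) 1, t ^ k * (-Real.log t) = 1 / ((k:ℝ) + 1) ^ 2 := by
  set g : ℝ → ℝ := fun t => (t ^ (k+1) - ((k:ℝ)+1) * (t ^ k * (t * Real.log t))) / ((k:ℝ)+1)^2
    with hgdef
  have hk1 : ((k:ℝ) + 1) ≠ 0 := by positivity
  have hg : Continuous g :=
    ((continuous_pow (k+1)).sub (continuous_const.mul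
      ((continuous_pow k).mul Real.continuous_mul_log))).div_const _
  have hderiv : ∀ t ∈ Set.Ioo (0:ℝ) 1, HasDerivAt g (t ^ k * (-Real.log t)) t := by
    intro t ht
    have h1 : HasDerivAt (fun t : ℝ => t ^ (k+1)) (((k:ℝ)+1) * t ^ k) t := by
      simpa using hasDerivAt_pow (k+1) t
    have h2 : HasDerivAt (fun t : ℝ => t * Real.log t) (Real.log t + 1) t :=
      Real.hasDerivAt_mul_log ht.1.ne'
    have h3 : HasDerivAt (fun t : ℝ => t ^ k * (t * Real.log t))
        ((k:ℝ) * t ^ (k-1) * (t * Real.log t) + t ^ k * (Real.log t + 1)) t :=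
      (hasDerivAt_pow k t).mul h2
    have h4 := (h1.sub (h3.const_mul (((k:ℝ)+1)))).div_const (((k:ℝ)+1)^2)
    refine h4.congr_deriv ?_
    rcases k with _ | m
    · simp
    · have : ((m+1 : ℕ) : ℝ) = (m:ℝ) + 1 := by push_cast; ring
      simp only [Nat.add_sub_cancel, Nat.cast_add, Nat.cast_one]
      field_simp
      ring
  have hpos : ∀ t ∈ Set.Ioo (0:ℝ) 1, 0 ≤ t ^ k * (-Real.log t) := by
    intro t ht
    have := Real.log_nonpos ht.1.le ht.2.le
    have h0 : (0:ℝ) ≤ t ^ k := pow_nonneg ht.1.le k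
    nlinarith
  have hint : IntegrableOn (fun t : ℝ => t ^ k * (-Real.log t)) (Set.Ioc 0 1) volume :=
    intervalIntegral.integrableOn_deriv_of_nonneg hg.continuousOn hderiv hpos
  refine ⟨hint, ?_⟩
  have hval := intervalIntegral.integral_eq_sub_of_hasDeriv_right_of_le (by norm_num : (0:ℝ) ≤ 1)
    hg.continuousOn (fun t ht => (hderiv t ht).hasDerivWithinAt)
    ((intervalIntegrable_iff_integrableOn_Ioc_of_le (by norm_num)).mpr hint)
  rw [intervalIntegral.integral_of_le (by norm_num : (0:ℝ) ≤ 1)] at hval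
  rw [hval]
  simp [hgdef, Real.log_one, zero_pow (Nat.succ_ne_zero k)]

lemma neglog_int : IntegrableOn (fun t : ℝ => -Real.log t) (Set.Ioc 0 1) volume := by
  have := (real_log_int 0).1
  simpa using this

lemma neglog_val : ∫ t in Set.Ioc (0:ℝ) 1, -Real.log t = 1 := by
  have := (real_log_int 0).2
  simpa using this

lemma integral_ofReal_complex {μ : MeasureTheory.Measure ℝ} {f : ℝ → ℝ} :
    ∫ t, ((f t : ℝ) : ℂ) ∂μ = ((∫ t, f t ∂μ : ℝ) : ℂ) :=
  integral_ofReal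

/-- For `|x| < 1` and `α = -x/2`, the transformed sequence
`W_n = (B_{α,1} Q)_n / (1+α)^{n+1}` is summable and its sum equals the Maclaurin
series of the dilogarithm, `∑ x^{k+1}/(k+1)²`. -/
theorem stmt_19 (x : ℂ) (hx : ‖x‖ < 1) (α : ℂ) (hα : α = -x / 2) (W : ℕ → ℂ)
    (hW : W = fun (n : ℕ) =>
      (∑ k ∈ Finset.range (n + 1),
        (n.choose k : ℂ) * α ^ (n - k) * x ^ (k + 1) / ((k : ℂ) + 1) ^ 2) / (1 + α) ^ (n + 1)) :
    Summable W ∧ ∑' n, W n = ∑' k : ℕ, x ^ (k + 1) / ((k : ℂ) + 1) ^ 2 := by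
  have hxnn : (0:ℝ) ≤ ‖x‖ := norm_nonneg x
  set c : ℝ := ‖1 + α‖ with hc
  have hαabs : ‖α‖ = ‖x‖ / 2 := by
    rw [hα, norm_div, norm_neg, Complex.norm_two]
  have hc2 : ‖x‖ / 2 < c := by
    have htri : ‖(1+α) + (-α)‖ ≤ ‖1+α‖ + ‖-α‖ :=
      norm_add_le _ _
    simp only [add_neg_cancel_right, norm_one, norm_neg] at htri
    rw [hαabs] at htri
    linarith
  have hc0 : (0:ℝ) < c := lt_of_le_of_lt (by positivity) hc2
  have h1α : (1:ℂ) + α ≠ 0 := by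
    intro h
    rw [hc, h] at hc0
    simp at hc0
  set L : ℝ → ℂ := fun t => ((-Real.log t : ℝ) : ℂ) with hL
  set F : ℕ → ℝ → ℂ := fun n t => x * ((α + x*(t:ℂ))^n / (1+α)^(n+1)) * L t with hF
  set G : ℕ → ℝ → ℂ := fun k t => x^(k+1) * ((t:ℂ))^k * L t with hG
  have habound : ∀ t ∈ Set.Ioc (0:ℝ) 1, ‖α + x*(t:ℂ)‖ ≤ ‖x‖ / 2 := by
    intro t ht
    have : α + x*(t:ℂ) = x * (((t - 1/2 : ℝ)) : ℂ) := by
      rw [hα]; push_cast; ring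
    rw [this, norm_mul, Complex.norm_real, Real.norm_eq_abs]
    have : |t - 1/2| ≤ 1/2 := by
      rw [abs_le]; constructor <;> [linarith [ht.1.le]; linarith [ht.2]]
    calc ‖x‖ * |t - 1/2| ≤ ‖x‖ * (1/2) := by
          exact mul_le_mul_of_nonneg_left this hxnn
      _ = ‖x‖ / 2 := by ring
  -- G side integrability and values
  have hGrw : ∀ k, G k = fun t : ℝ => x^(k+1) * ((t^k * (-Real.log t) : ℝ) : ℂ) := by
    intro k; funext t; simp only [hG, hL]; push_cast; ring
  have hink : ∀ k : ℕ, Integrable (fun t : ℝ => ((t^k * (-Real.log t) : ℝ) : ℂ))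
      (volume.restrict (Set.Ioc (0:ℝ) 1)) := fun k => (real_log_int k).1.ofReal
  have hG_int : ∀ k, Integrable (G k) (volume.restrict (Set.Ioc (0:ℝ) 1)) := by
    intro k
    rw [hGrw k]
    exact (hink k).const_mul _
  have hG_val : ∀ k, ∫ t in Set.Ioc (0:ℝ) 1, G k t = x^(k+1) / ((k:ℂ)+1)^2 := by
    intro k
    rw [hGrw k]
    rw [integral_const_mul, integral_ofReal_complex, (real_log_int k).2]
    push_cast
    ring
  -- F side: W n equals the integral of F n
  have hW_eq : ∀ n, W n = ∫ t in Set.Ioc (0:ℝ) 1, F n t := by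
    intro n
    have hexp : (fun t : ℝ => F n t) = fun t => ∑ k ∈ Finset.range (n+1),
        ((n.choose k : ℂ) * α ^ (n-k) * x ^ (k+1) / (1+α)^(n+1)) *
          ((t^k * (-Real.log t) : ℝ) : ℂ) := by
      funext t
      simp only [hF, hL]
      rw [show α + x*(t:ℂ) = x*(t:ℂ) + α from by ring, add_pow]
      rw [Finset.sum_div, Finset.mul_sum, Finset.sum_mul]
      refine Finset.sum_congr rfl fun k hk => ?_
      push_cast
      ring
    have hink : ∀ k : ℕ, Integrable (fun t : ℝ => ((t^k * (-Real.log t) : ℝ) : ℂ))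
        (volume.restrict (Set.Ioc (0:ℝ) 1)) := fun k => (real_log_int k).1.ofReal
    rw [hexp, integral_finset_sum _ (fun k _ => (hink k).const_mul _)]
    rw [hW]
    simp only
    rw [Finset.sum_div]
    refine Finset.sum_congr rfl fun k hk => ?_
    rw [integral_const_mul, integral_ofReal_complex, (real_log_int k).2]
    push_cast
    ring
  set B : ℕ → ℝ := fun n => ‖x‖ * ((‖x‖ / 2)^n / c^(n+1)) with hB
  have hbnd_int : ∀ n : ℕ, Integrable (fun t : ℝ => B n * (-Real.log t))
      (volume.restrict (Set.Ioc (0:ℝ) 1)) := fun n => neglog_int.const_mul _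
  have hF_bound : ∀ n, ∀ᵐ t ∂(volume.restrict (Set.Ioc (0:ℝ) 1)),
      ‖F n t‖ ≤ B n * (-Real.log t) := by
    intro n
    filter_upwards [ae_restrict_mem measurableSet_Ioc] with t ht
    have hlog : (0:ℝ) ≤ -Real.log t := by
      simpa using Real.log_nonpos ht.1.le ht.2
    have : ‖F n t‖ = ‖x‖ * (‖α + x*(t:ℂ)‖^n / c^(n+1)) * (-Real.log t) := by
      simp only [hF, hL, norm_mul, norm_div, norm_pow, Complex.norm_real, Real.norm_eq_abs]
      rw [abs_of_nonneg hlog]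
    rw [this]
    show _ ≤ ‖x‖ * ((‖x‖ / 2)^n / c^(n+1)) * (-Real.log t)
    have h1 : ‖α + x*(t:ℂ)‖^n ≤ (‖x‖ / 2)^n :=
      pow_le_pow_left₀ (norm_nonneg _) (habound t ht) n
    gcongr
  have hF_meas : ∀ n, AEStronglyMeasurable (F n) (volume.restrict (Set.Ioc (0:ℝ) 1)) := by
    intro n
    apply Measurable.aestronglyMeasurable
    apply Measurable.mul
    · apply Measurable.mul measurable_const
      exact ((Complex.measurable_ofReal.const_mul x).const_add α).pow_const n |>.div_const _
    · exact Complex.measurable_ofReal.comp Real.measurable_log.neg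
  have hF_int : ∀ n, Integrable (F n) (volume.restrict (Set.Ioc (0:ℝ) 1)) := by
    intro n
    refine (hbnd_int n).mono (hF_meas n) ?_
    filter_upwards [hF_bound n] with t ht
    exact ht.trans (le_abs_self _)
  have hF_norm : ∀ n, ∫ t in Set.Ioc (0:ℝ) 1, ‖F n t‖ ≤ B n := by
    intro n
    have h1 : ∫ t in Set.Ioc (0:ℝ) 1, ‖F n t‖ ≤ ∫ t in Set.Ioc (0:ℝ) 1, B n * (-Real.log t) :=
      integral_mono_ae (hF_int n).norm (hbnd_int n) (hF_bound n)
    rwa [integral_const_mul, neglog_val, mul_one] at h1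
  have hr : (‖x‖ / 2) / c < 1 := (div_lt_one hc0).mpr hc2
  have hBsum : Summable B := by
    have : B = fun n => (‖x‖ / c) * ((‖x‖ / 2) / c)^n := by
      funext n
      show ‖x‖ * ((‖x‖ / 2)^n / c^(n+1)) = _
      rw [div_pow, pow_succ]
      simp only [div_pow]
      field_simp
    rw [this]
    exact (summable_geometric_of_lt_one (by positivity) hr).mul_left _
  have hFnorm_sum : Summable fun n => ∫ t in Set.Ioc (0:ℝ) 1, ‖F n t‖ :=
    Summable.of_nonneg_of_le (fun n => integral_nonneg fun t => norm_nonneg _) hF_norm hBsum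
  have hsF := hasSum_integral_of_summable_integral_norm hF_int hFnorm_sum
  -- G side norms
  have hG_norm : ∀ k, ∫ t in Set.Ioc (0:ℝ) 1, ‖G k t‖ ≤ ‖x‖ ^ (k+1) := by
    intro k
    have heq : ∀ᵐ t ∂(volume.restrict (Set.Ioc (0:ℝ) 1)),
        ‖G k t‖ ≤ ‖x‖ ^ (k+1) * (-Real.log t) := by
      filter_upwards [ae_restrict_mem measurableSet_Ioc] with t ht
      have hlog : (0:ℝ) ≤ -Real.log t := by
        simpa using Real.log_nonpos ht.1.le ht.2
      have : ‖G k t‖ = ‖x‖ ^ (k+1) * t^k * (-Real.log t) := by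
        simp only [hG, hL, norm_mul, norm_pow, Complex.norm_real, Real.norm_eq_abs]
        rw [abs_of_nonneg hlog, abs_of_nonneg ht.1.le]
      rw [this]
      have ht1 : t^k ≤ 1 := pow_le_one₀ ht.1.le ht.2
      have h2 : ‖x‖ ^ (k+1) * t^k ≤ ‖x‖ ^ (k+1) * 1 :=
        mul_le_mul_of_nonneg_left ht1 (pow_nonneg hxnn _)
      calc ‖x‖ ^ (k+1) * t^k * (-Real.log t)
          ≤ ‖x‖ ^ (k+1) * 1 * (-Real.log t) :=
            mul_le_mul_of_nonneg_right h2 hlog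
        _ = ‖x‖ ^ (k+1) * (-Real.log t) := by ring
    have h1 : ∫ t in Set.Ioc (0:ℝ) 1, ‖G k t‖ ≤
        ∫ t in Set.Ioc (0:ℝ) 1, ‖x‖ ^ (k+1) * (-Real.log t) :=
      integral_mono_ae (hG_int k).norm (neglog_int.const_mul _) heq
    rwa [integral_const_mul, neglog_val, mul_one] at h1
  have hGnorm_sum : Summable fun k => ∫ t in Set.Ioc (0:ℝ) 1, ‖G k t‖ := by
    refine Summable.of_nonneg_of_le (fun k => integral_nonneg fun t => norm_nonneg _) hG_norm ?_
    have : (fun k : ℕ => ‖x‖ ^ (k+1)) = fun k => ‖x‖ * ‖x‖ ^ k := by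
      funext k; rw [pow_succ]; ring
    rw [this]
    exact (summable_geometric_of_lt_one hxnn hx).mul_left _
  have hsG := hasSum_integral_of_summable_integral_norm hG_int hGnorm_sum
  -- pointwise equality of the two tsums
  have hpt : Set.EqOn (fun t : ℝ => ∑' n, F n t) (fun t : ℝ => ∑' k, G k t)
      (Set.Ioc (0:ℝ) 1) := by
    intro t ht
    have hxt : ‖x * (t:ℂ)‖ < 1 := by
      rw [norm_mul, Complex.norm_real, Real.norm_eq_abs, abs_of_nonneg ht.1.le]
      calc ‖x‖ * t ≤ ‖x‖ * 1 := by
            exact mul_le_mul_of_nonneg_left ht.2 hxnn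
        _ = ‖x‖ := mul_one _
        _ < 1 := hx
    have h1xt : (1:ℂ) - x*(t:ℂ) ≠ 0 := by
      intro h
      have : (1:ℂ) = x*(t:ℂ) := by linear_combination h
      rw [← this] at hxt
      simp at hxt
    have hratio : ‖(α + x*(t:ℂ))/(1+α)‖ < 1 := by
      rw [norm_div]
      rw [div_lt_one hc0]
      exact lt_of_le_of_lt (habound t ht) hc2
    have hden : (1:ℂ) - (α + x*(t:ℂ))/(1+α) = (1 - x*(t:ℂ))/(1+α) := by
      field_simp
      ring
    simp only
    calc ∑' n, F n t = ∑' n, (x * L t / (1+α)) * ((α + x*(t:ℂ))/(1+α))^n := by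
          refine tsum_congr fun n => ?_
          simp only [hF]
          rw [div_pow]
          field_simp [pow_succ]
          ring
      _ = (x * L t / (1+α)) * (1 - (α + x*(t:ℂ))/(1+α))⁻¹ := by
          rw [tsum_mul_left, tsum_geometric_of_norm_lt_one hratio]
      _ = x * L t * (1 - x*(t:ℂ))⁻¹ := by
          rw [hden, inv_div]
          field_simp
      _ = (x * L t) * (1 - x*(t:ℂ))⁻¹ := by ring
      _ = ∑' k, G k t := by
          rw [← tsum_geometric_of_norm_lt_one (by exact hxt : ‖x*(t:ℂ)‖ < 1),
            ← tsum_mul_left]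
          refine tsum_congr fun k => ?_
          simp only [hG]
          rw [mul_pow]
          ring
  have hint_eq : ∫ t in Set.Ioc (0:ℝ) 1, ∑' n, F n t = ∫ t in Set.Ioc (0:ℝ) 1, ∑' k, G k t :=
    setIntegral_congr_fun measurableSet_Ioc hpt
  have hWfun : (fun n => ∫ t in Set.Ioc (0:ℝ) 1, F n t) = W := funext fun n => (hW_eq n).symm
  rw [hWfun] at hsF
  have hGfun : (fun k => ∫ t in Set.Ioc (0:ℝ) 1, G k t)
      = fun k : ℕ => x^(k+1) / ((k:ℂ)+1)^2 := funext hG_val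
  rw [hGfun] at hsG
  refine ⟨hsF.summable, ?_⟩
  rw [hsF.tsum_eq, hint_eq, ← hsG.tsum_eq]
end
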